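/- Let r ∈ R and let A ∈ J(R) be a constructible right ideal. (1) If A contains r x_{n_1} and r x_{n_2} for some n_1 ≠ n_2 (or contains r y_{n_1} and r y_{n_2} for some n_1 ≠ n_2), then A contains r x_n and r y_n for all n ∈ ℤ. (2) If A contains r x_{n_1} t_1 and r x_{n_2} t_2 for some n_1 ≠ n_2 and t_1, t_2 ∈ R, then A contains the set r · (⋃_{n ∈ ℤ, w' ∈ R ∖ {e}} x_n w' R); symmetrically, if A contains r y_{n_1} t_1 and r y_{n_2} t_2 with n_1 ≠ n_2, then A contains r · (⋃_{n ∈ ℤ, w' ∈ R ∖ {e}} y_n w' R). -/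

import Mathlib

open scoped Classical

namespace SgC

variable {M : Type*}

/-- Composition of partial maps (`g` after `f`). -/
def pcomp (g f : M → Option M) : M → Option M := fun s => (f s).bind g

/-- The canonical partial inverse of a partial map (the genuine inverse when the map
is injective on its domain, as is the case for all maps in the left inverse hull of a
left cancellative monoid). -/
noncomputable def pinv (f : M → Option M) : M → Option M :=
  fun t => if h : ∃ s, f s = some t then some h.choose else none

/-- Left translation `t ↦ s * t` as an everywhere-defined partial map. -/
def ptransl [Mul M] (s : M) : M → Option M := fun t => some (s * t)

/-- The identity partial map. -/
def pid : M → Option M := fun s => some s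

/-- The block `q⁻¹ ∘ p`: first multiply on the left by `p`, then remove `q` on the left. -/
noncomputable def pblock [Mul M] (p : M × M) : M → Option M :=
  pcomp (pinv (ptransl p.2)) (ptransl p.1)

/-- Membership in the left inverse hull `I_ℓ(M)`: `h` is of the form
`s₂ₙ⁻¹ s₂ₙ₋₁ ⋯ s₂⁻¹ s₁` for some `n ≥ 1` and `sᵢ ∈ M` (the list records the pairs
`(s₁,s₂), (s₃,s₄), …`, applied left to right). -/
def InInvHull [Mul M] (h : M → Option M) : Prop :=
  ∃ l : List (M × M), l ≠ [] ∧
    h = l.foldl (fun acc p => pcomp (pblock p) acc) pid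

/-- Membership in the inverse hull generated by translations by elements of `σ` only
(used for canonical copies of `I_ℓ(S)` inside partial maps of a larger monoid). -/
def InInvHullOn [Mul M] (σ : Set M) (h : M → Option M) : Prop :=
  ∃ l : List (M × M), l ≠ [] ∧ (∀ p ∈ l, p.1 ∈ σ ∧ p.2 ∈ σ) ∧
    h = l.foldl (fun acc p => pcomp (pblock p) acc) pid

/-- Domain of a partial map. -/
def pdom (h : M → Option M) : Set M := {s | h s ≠ none}

/-- `h` fixes the set `Y` pointwise (in particular `Y ⊆ dom h`). -/
def PFixes (h : M → Option M) (Y : Set M) : Prop := ∀ s ∈ Y, h s = some s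

/-- Preimage of a set under a partial map. -/
def ppre (h : M → Option M) (X : Set M) : Set M := {s | ∃ x ∈ X, h s = some x}

/-- Constructible right ideals: domains of elements of the left inverse hull. -/
def IsConstructible [Mul M] (X : Set M) : Prop := ∃ h, InInvHull h ∧ X = pdom h

/-- Membership in `J̄(S)`: sets of the form `X₀` or `X₀ ∖ (X₁ ∪ ⋯ ∪ Xₘ)` with all
`Xᵢ` constructible. -/
def IsConstructibleBar [Mul M] (X : Set M) : Prop :=
  ∃ (X₀ : Set M) (m : ℕ) (Xi : Fin m → Set M),
    IsConstructible X₀ ∧ (∀ i, IsConstructible (Xi i)) ∧ X = X₀ \ ⋃ i, Xi i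

/-- `Xi` is a foundation family for `X`: each `Xi i ⊆ X` and every nonempty
constructible right ideal contained in `X` intersects some `Xi i`. -/
def IsFoundation [Mul M] (X : Set M) {ι : Type*} (Xi : ι → Set M) : Prop :=
  (∀ i, Xi i ⊆ X) ∧
  ∀ Y : Set M, IsConstructible Y → Y.Nonempty → Y ⊆ X → ∃ i, (Y ∩ Xi i).Nonempty

/-- Strong C*-regularity. -/
def StronglyRegular (M : Type*) [Monoid M] : Prop :=
  ∀ (n : ℕ) (h : Fin n → M → Option M), (∀ k, InInvHull (h k)) →
  ∀ (m : ℕ) (X : Set M) (Xi : Fin m → Set M),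
    IsConstructible X → (∀ i, IsConstructible (Xi i)) →
    (X \ ⋃ i, Xi i).Nonempty →
    (X \ ⋃ i, Xi i) ⊆ ⋃ k, {s | h k s = some s} →
    ∃ (l : ℕ) (Y : Fin l → Set M) (kk : Fin l → Fin n),
      (∀ j, IsConstructible (Y j)) ∧
      (X \ ⋃ i, Xi i) ⊆ ⋃ j, Y j ∧
      ∀ j, PFixes (h (kk j)) (Y j)

/-- C*-regularity. -/
def Regular (M : Type*) [Monoid M] : Prop :=
  ∀ (n : ℕ) (h : Fin n → M → Option M), (∀ k, InInvHull (h k)) →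
  ∀ X : Set M, IsConstructibleBar X → X.Nonempty →
    X ⊆ ⋃ k, {s | h k s = some s} →
    ∃ (l : ℕ) (Y : Fin l → Set M) (kk : Fin l → Fin n),
      (∀ j, IsConstructibleBar (Y j)) ∧ X ⊆ ⋃ j, Y j ∧
      ∀ j, PFixes (h (kk j)) (Y j)

/-- Strong C*-regularity on the boundary. -/
def StronglyRegularOnBoundary (M : Type*) [Monoid M] : Prop :=
  ∀ (n : ℕ) (h : Fin n → M → Option M), (∀ k, InInvHull (h k)) →
  ∀ (m : ℕ) (X : Set M) (Xi : Fin m → Set M),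
    IsConstructible X → (∀ i, IsConstructible (Xi i)) → (∀ i, Xi i ⊆ X) →
    (X \ ⋃ i, Xi i).Nonempty →
    (X \ ⋃ i, Xi i) ⊆ ⋃ k, {s | h k s = some s} →
    ∃ (l : ℕ) (Y : Fin l → Set M) (kk : Fin l → Fin n),
      (∀ j, IsConstructible (Y j)) ∧ (∀ j, PFixes (h (kk j)) (Y j)) ∧
      IsFoundation X (Sum.elim Xi Y)

/-- C*-regularity on the boundary. -/
def RegularOnBoundary (M : Type*) [Monoid M] : Prop :=
  ∀ (n : ℕ) (h : Fin n → M → Option M), (∀ k, InInvHull (h k)) →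
  ∀ (m : ℕ) (X : Set M) (Xi : Fin m → Set M),
    IsConstructible X → (∀ i, IsConstructible (Xi i)) → (∀ i, Xi i ⊆ X) →
    (X \ ⋃ i, Xi i).Nonempty →
    (X \ ⋃ i, Xi i) ⊆ ⋃ k, {s | h k s = some s} →
    ∃ (l : ℕ) (Y : Fin l → Set M) (kk : Fin l → Fin n),
      (∀ j, IsConstructibleBar (Y j)) ∧ (∀ j, PFixes (h (kk j)) (Y j)) ∧
      IsFoundation X (Sum.elim Xi Y)

/-- The type of constructible right ideals `J(M)`. -/
def CIdeal (M : Type*) [Mul M] : Type _ := {X : Set M // IsConstructible X}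

/-- The character space `{0,1}^{J(M)}` with the topology of pointwise convergence. -/
abbrev CharSpace (M : Type*) [Mul M] : Type _ := CIdeal M → Bool

/-- The principal character `χ_s`. -/
noncomputable def princhar [Mul M] (s : M) : CharSpace M :=
  fun X => decide (s ∈ X.1)

/-- `Ω(M)`: the closure of the set of principal characters. -/
noncomputable def Omega (M : Type*) [Mul M] : Set (CharSpace M) :=
  closure (Set.range (princhar : M → CharSpace M))

/-- Filters on `J(M)`: nonempty collections of nonempty constructible ideals closed
under intersections and enlargements within `J(M)`. -/
def IsFilterOn [Mul M] (F : Set (CIdeal M)) : Prop :=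
  F.Nonempty ∧ (∀ X ∈ F, (X.1 : Set M).Nonempty) ∧
  (∀ X ∈ F, ∀ Y ∈ F, ∀ Z : CIdeal M, Z.1 = X.1 ∩ Y.1 → Z ∈ F) ∧
  (∀ X ∈ F, ∀ Y : CIdeal M, X.1 ⊆ Y.1 → Y ∈ F)

/-- Nonzero multiplicative `{0,1}`-valued maps on `J(M)`. -/
def IsChar [Mul M] (χ : CharSpace M) : Prop :=
  (∃ X, χ X = true) ∧
  ∀ X Y Z : CIdeal M, Z.1 = X.1 ∩ Y.1 → χ Z = (χ X && χ Y)

/-- Maximal characters: characters whose associated filter is maximal among filters. -/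
def IsMaximalChar [Mul M] (χ : CharSpace M) : Prop :=
  IsChar χ ∧ IsFilterOn {X | χ X = true} ∧
  ∀ G : Set (CIdeal M), IsFilterOn G → {X | χ X = true} ⊆ G → G = {X | χ X = true}

/-- The set of maximal characters `Ω_max(M)`. -/
def OmegaMax (M : Type*) [Mul M] : Set (CharSpace M) := {χ | IsMaximalChar χ}

/-- The boundary `∂Ω(M)`: the closure of the set of maximal characters. -/
noncomputable def BoundaryOmega (M : Type*) [Mul M] : Set (CharSpace M) :=
  closure (OmegaMax M)


/-! ### The monoid `R` -/

/-- Generators of the monoid `R`. -/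
inductive Gen : Type
  | a : Gen
  | b : Gen
  | c : Gen
  | d : Gen
  | f : Gen
  | x : ℤ → Gen
  | y : ℤ → Gen

/-- The defining relations of the monoid `R`. -/
inductive RRel : FreeMonoid Gen → FreeMonoid Gen → Prop
  | abx (n : ℤ) : RRel (FreeMonoid.of Gen.a * FreeMonoid.of Gen.b * FreeMonoid.of (Gen.x n))
      (FreeMonoid.of Gen.b * FreeMonoid.of (Gen.x n))
  | aby (n : ℤ) : RRel (FreeMonoid.of Gen.a * FreeMonoid.of Gen.b * FreeMonoid.of (Gen.y n))
      (FreeMonoid.of Gen.b * FreeMonoid.of (Gen.y (n + 1)))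
  | cbx (n : ℤ) : RRel (FreeMonoid.of Gen.c * FreeMonoid.of Gen.b * FreeMonoid.of (Gen.x n))
      (FreeMonoid.of Gen.b * FreeMonoid.of (Gen.x (n + 1)))
  | cby (n : ℤ) : RRel (FreeMonoid.of Gen.c * FreeMonoid.of Gen.b * FreeMonoid.of (Gen.y n))
      (FreeMonoid.of Gen.b * FreeMonoid.of (Gen.y n))
  | dbx (n : ℤ) (z : Gen) :
      RRel (FreeMonoid.of Gen.d * FreeMonoid.of Gen.b * FreeMonoid.of (Gen.x n) * FreeMonoid.of z)
        (FreeMonoid.of Gen.b * FreeMonoid.of (Gen.x n) * FreeMonoid.of z)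
  | fby (n : ℤ) (z : Gen) :
      RRel (FreeMonoid.of Gen.f * FreeMonoid.of Gen.b * FreeMonoid.of (Gen.y n) * FreeMonoid.of z)
        (FreeMonoid.of Gen.b * FreeMonoid.of (Gen.y n) * FreeMonoid.of z)

/-- The monoid `R`: the quotient of the free monoid on the generators by the congruence
generated by the defining relations. -/
def R : Type := (conGen RRel).Quotient

noncomputable instance : Monoid R := inferInstanceAs (Monoid (conGen RRel).Quotient)

/-- The quotient map from the free monoid on the generators onto `R`. -/
def qR : FreeMonoid Gen →* R := Con.mk' _

/-- The image in `R` of a generator. -/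
noncomputable def gen (g : Gen) : R := qR (FreeMonoid.of g)

/-- A word contains a forbidden factor. -/
def IsForbidden (w : FreeMonoid Gen) : Prop :=
  ∃ n : ℤ,
    w = FreeMonoid.of Gen.a * FreeMonoid.of Gen.b * FreeMonoid.of (Gen.x n) ∨
    w = FreeMonoid.of Gen.a * FreeMonoid.of Gen.b * FreeMonoid.of (Gen.y n) ∨
    w = FreeMonoid.of Gen.c * FreeMonoid.of Gen.b * FreeMonoid.of (Gen.x n) ∨
    w = FreeMonoid.of Gen.c * FreeMonoid.of Gen.b * FreeMonoid.of (Gen.y n) ∨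
    w = FreeMonoid.of Gen.d * FreeMonoid.of Gen.b * FreeMonoid.of (Gen.x n) ∨
    w = FreeMonoid.of Gen.f * FreeMonoid.of Gen.b * FreeMonoid.of (Gen.y n)

/-- A word is reduced if it contains no forbidden factor. -/
def ReducedWord (u : FreeMonoid Gen) : Prop :=
  ¬ ∃ p w s : FreeMonoid Gen, IsForbidden w ∧ u = p * w * s

/-- The prefix word `w₁ w₂ ⋯ wₙ` of an infinite word. -/
def prefixWord (w : ℕ → Gen) (n : ℕ) : FreeMonoid Gen :=
  FreeMonoid.ofList ((List.range n).map w)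

/-! ### Auxiliary: normal form machinery for `R` -/

/-- One-step left multiplication by a generator on words (normal-form prepend). -/
def pre : Gen → List Gen → List Gen
  | Gen.a, Gen.b :: Gen.x n :: t => Gen.b :: Gen.x n :: t
  | Gen.a, Gen.b :: Gen.y n :: t => Gen.b :: Gen.y (n+1) :: t
  | Gen.a, U => Gen.a :: U
  | Gen.c, Gen.b :: Gen.x n :: t => Gen.b :: Gen.x (n+1) :: t
  | Gen.c, Gen.b :: Gen.y n :: t => Gen.b :: Gen.y n :: t
  | Gen.c, U => Gen.c :: U
  | Gen.d, Gen.b :: Gen.x n :: z :: t => Gen.b :: Gen.x n :: z :: t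
  | Gen.d, U => Gen.d :: U
  | Gen.f, Gen.b :: Gen.y n :: z :: t => Gen.b :: Gen.y n :: z :: t
  | Gen.f, U => Gen.f :: U
  | g, U => g :: U

@[simp] lemma pre_b (U) : pre Gen.b U = Gen.b :: U := rfl
@[simp] lemma pre_x (n U) : pre (Gen.x n) U = Gen.x n :: U := rfl
@[simp] lemma pre_y (n U) : pre (Gen.y n) U = Gen.y n :: U := rfl
@[simp] lemma pre_a_bx (n t) : pre Gen.a (Gen.b :: Gen.x n :: t) = Gen.b :: Gen.x n :: t := rfl
@[simp] lemma pre_a_by (n t) : pre Gen.a (Gen.b :: Gen.y n :: t) = Gen.b :: Gen.y (n+1) :: t := rfl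
@[simp] lemma pre_c_bx (n t) : pre Gen.c (Gen.b :: Gen.x n :: t) = Gen.b :: Gen.x (n+1) :: t := rfl
@[simp] lemma pre_c_by (n t) : pre Gen.c (Gen.b :: Gen.y n :: t) = Gen.b :: Gen.y n :: t := rfl
@[simp] lemma pre_d_bxz (n z t) : pre Gen.d (Gen.b :: Gen.x n :: z :: t) = Gen.b :: Gen.x n :: z :: t := rfl
@[simp] lemma pre_f_byz (n z t) : pre Gen.f (Gen.b :: Gen.y n :: z :: t) = Gen.b :: Gen.y n :: z :: t := rfl
@[simp] lemma pre_a_nil : pre Gen.a [] = [Gen.a] := rfl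
@[simp] lemma pre_a_a (t) : pre Gen.a (Gen.a :: t) = Gen.a :: Gen.a :: t := rfl
@[simp] lemma pre_a_c (t) : pre Gen.a (Gen.c :: t) = Gen.a :: Gen.c :: t := rfl
@[simp] lemma pre_a_d (t) : pre Gen.a (Gen.d :: t) = Gen.a :: Gen.d :: t := rfl
@[simp] lemma pre_a_f (t) : pre Gen.a (Gen.f :: t) = Gen.a :: Gen.f :: t := rfl
@[simp] lemma pre_a_xh (n t) : pre Gen.a (Gen.x n :: t) = Gen.a :: Gen.x n :: t := rfl
@[simp] lemma pre_a_yh (n t) : pre Gen.a (Gen.y n :: t) = Gen.a :: Gen.y n :: t := rfl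
@[simp] lemma pre_a_b1 : pre Gen.a [Gen.b] = [Gen.a, Gen.b] := rfl
@[simp] lemma pre_a_ba (t) : pre Gen.a (Gen.b :: Gen.a :: t) = Gen.a :: Gen.b :: Gen.a :: t := rfl
@[simp] lemma pre_a_bb (t) : pre Gen.a (Gen.b :: Gen.b :: t) = Gen.a :: Gen.b :: Gen.b :: t := rfl
@[simp] lemma pre_a_bc (t) : pre Gen.a (Gen.b :: Gen.c :: t) = Gen.a :: Gen.b :: Gen.c :: t := rfl
@[simp] lemma pre_a_bd (t) : pre Gen.a (Gen.b :: Gen.d :: t) = Gen.a :: Gen.b :: Gen.d :: t := rfl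
@[simp] lemma pre_a_bf (t) : pre Gen.a (Gen.b :: Gen.f :: t) = Gen.a :: Gen.b :: Gen.f :: t := rfl
@[simp] lemma pre_c_nil : pre Gen.c [] = [Gen.c] := rfl
@[simp] lemma pre_c_a (t) : pre Gen.c (Gen.a :: t) = Gen.c :: Gen.a :: t := rfl
@[simp] lemma pre_c_c (t) : pre Gen.c (Gen.c :: t) = Gen.c :: Gen.c :: t := rfl
@[simp] lemma pre_c_d (t) : pre Gen.c (Gen.d :: t) = Gen.c :: Gen.d :: t := rfl
@[simp] lemma pre_c_f (t) : pre Gen.c (Gen.f :: t) = Gen.c :: Gen.f :: t := rfl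
@[simp] lemma pre_c_xh (n t) : pre Gen.c (Gen.x n :: t) = Gen.c :: Gen.x n :: t := rfl
@[simp] lemma pre_c_yh (n t) : pre Gen.c (Gen.y n :: t) = Gen.c :: Gen.y n :: t := rfl
@[simp] lemma pre_c_b1 : pre Gen.c [Gen.b] = [Gen.c, Gen.b] := rfl
@[simp] lemma pre_c_ba (t) : pre Gen.c (Gen.b :: Gen.a :: t) = Gen.c :: Gen.b :: Gen.a :: t := rfl
@[simp] lemma pre_c_bb (t) : pre Gen.c (Gen.b :: Gen.b :: t) = Gen.c :: Gen.b :: Gen.b :: t := rfl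
@[simp] lemma pre_c_bc (t) : pre Gen.c (Gen.b :: Gen.c :: t) = Gen.c :: Gen.b :: Gen.c :: t := rfl
@[simp] lemma pre_c_bd (t) : pre Gen.c (Gen.b :: Gen.d :: t) = Gen.c :: Gen.b :: Gen.d :: t := rfl
@[simp] lemma pre_c_bf (t) : pre Gen.c (Gen.b :: Gen.f :: t) = Gen.c :: Gen.b :: Gen.f :: t := rfl
@[simp] lemma pre_d_nil : pre Gen.d [] = [Gen.d] := rfl
@[simp] lemma pre_d_a (t) : pre Gen.d (Gen.a :: t) = Gen.d :: Gen.a :: t := rfl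
@[simp] lemma pre_d_c (t) : pre Gen.d (Gen.c :: t) = Gen.d :: Gen.c :: t := rfl
@[simp] lemma pre_d_d (t) : pre Gen.d (Gen.d :: t) = Gen.d :: Gen.d :: t := rfl
@[simp] lemma pre_d_f (t) : pre Gen.d (Gen.f :: t) = Gen.d :: Gen.f :: t := rfl
@[simp] lemma pre_d_xh (n t) : pre Gen.d (Gen.x n :: t) = Gen.d :: Gen.x n :: t := rfl
@[simp] lemma pre_d_yh (n t) : pre Gen.d (Gen.y n :: t) = Gen.d :: Gen.y n :: t := rfl
@[simp] lemma pre_d_b1 : pre Gen.d [Gen.b] = [Gen.d, Gen.b] := rfl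
@[simp] lemma pre_d_ba (t) : pre Gen.d (Gen.b :: Gen.a :: t) = Gen.d :: Gen.b :: Gen.a :: t := rfl
@[simp] lemma pre_d_bb (t) : pre Gen.d (Gen.b :: Gen.b :: t) = Gen.d :: Gen.b :: Gen.b :: t := rfl
@[simp] lemma pre_d_bc (t) : pre Gen.d (Gen.b :: Gen.c :: t) = Gen.d :: Gen.b :: Gen.c :: t := rfl
@[simp] lemma pre_d_bd (t) : pre Gen.d (Gen.b :: Gen.d :: t) = Gen.d :: Gen.b :: Gen.d :: t := rfl
@[simp] lemma pre_d_bf (t) : pre Gen.d (Gen.b :: Gen.f :: t) = Gen.d :: Gen.b :: Gen.f :: t := rfl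
@[simp] lemma pre_f_nil : pre Gen.f [] = [Gen.f] := rfl
@[simp] lemma pre_f_a (t) : pre Gen.f (Gen.a :: t) = Gen.f :: Gen.a :: t := rfl
@[simp] lemma pre_f_c (t) : pre Gen.f (Gen.c :: t) = Gen.f :: Gen.c :: t := rfl
@[simp] lemma pre_f_d (t) : pre Gen.f (Gen.d :: t) = Gen.f :: Gen.d :: t := rfl
@[simp] lemma pre_f_f (t) : pre Gen.f (Gen.f :: t) = Gen.f :: Gen.f :: t := rfl
@[simp] lemma pre_f_xh (n t) : pre Gen.f (Gen.x n :: t) = Gen.f :: Gen.x n :: t := rfl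
@[simp] lemma pre_f_yh (n t) : pre Gen.f (Gen.y n :: t) = Gen.f :: Gen.y n :: t := rfl
@[simp] lemma pre_f_b1 : pre Gen.f [Gen.b] = [Gen.f, Gen.b] := rfl
@[simp] lemma pre_f_ba (t) : pre Gen.f (Gen.b :: Gen.a :: t) = Gen.f :: Gen.b :: Gen.a :: t := rfl
@[simp] lemma pre_f_bb (t) : pre Gen.f (Gen.b :: Gen.b :: t) = Gen.f :: Gen.b :: Gen.b :: t := rfl
@[simp] lemma pre_f_bc (t) : pre Gen.f (Gen.b :: Gen.c :: t) = Gen.f :: Gen.b :: Gen.c :: t := rfl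
@[simp] lemma pre_f_bd (t) : pre Gen.f (Gen.b :: Gen.d :: t) = Gen.f :: Gen.b :: Gen.d :: t := rfl
@[simp] lemma pre_f_bf (t) : pre Gen.f (Gen.b :: Gen.f :: t) = Gen.f :: Gen.b :: Gen.f :: t := rfl
@[simp] lemma pre_d_bx1 (n) : pre Gen.d [Gen.b, Gen.x n] = [Gen.d, Gen.b, Gen.x n] := rfl
@[simp] lemma pre_d_by (n t) : pre Gen.d (Gen.b :: Gen.y n :: t) = Gen.d :: Gen.b :: Gen.y n :: t := rfl
@[simp] lemma pre_f_by1 (n) : pre Gen.f [Gen.b, Gen.y n] = [Gen.f, Gen.b, Gen.y n] := rfl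
@[simp] lemma pre_f_bx (n t) : pre Gen.f (Gen.b :: Gen.x n :: t) = Gen.f :: Gen.b :: Gen.x n :: t := rfl

lemma pre_a_cases (U : List Gen) :
    (∃ n t, U = Gen.b :: Gen.x n :: t ∧ pre Gen.a U = Gen.b :: Gen.x n :: t) ∨
    (∃ n t, U = Gen.b :: Gen.y n :: t ∧ pre Gen.a U = Gen.b :: Gen.y (n+1) :: t) ∨
    ((∀ n t, U ≠ Gen.b :: Gen.x n :: t) ∧ (∀ n t, U ≠ Gen.b :: Gen.y n :: t) ∧
      pre Gen.a U = Gen.a :: U) := by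
  match U with
  | [] | [Gen.b]
  | Gen.a :: _ | Gen.c :: _ | Gen.d :: _ | Gen.f :: _ | Gen.x _ :: _ | Gen.y _ :: _
  | Gen.b :: Gen.a :: _ | Gen.b :: Gen.b :: _ | Gen.b :: Gen.c :: _ | Gen.b :: Gen.d :: _
  | Gen.b :: Gen.f :: _ => exact Or.inr (Or.inr (by simp))
  | Gen.b :: Gen.x n :: t => exact Or.inl ⟨n, t, rfl, by simp⟩
  | Gen.b :: Gen.y n :: t => exact Or.inr (Or.inl ⟨n, t, rfl, by simp⟩)

lemma pre_c_cases (U : List Gen) :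
    (∃ n t, U = Gen.b :: Gen.x n :: t ∧ pre Gen.c U = Gen.b :: Gen.x (n+1) :: t) ∨
    (∃ n t, U = Gen.b :: Gen.y n :: t ∧ pre Gen.c U = Gen.b :: Gen.y n :: t) ∨
    ((∀ n t, U ≠ Gen.b :: Gen.x n :: t) ∧ (∀ n t, U ≠ Gen.b :: Gen.y n :: t) ∧
      pre Gen.c U = Gen.c :: U) := by
  match U with
  | [] | [Gen.b]
  | Gen.a :: _ | Gen.c :: _ | Gen.d :: _ | Gen.f :: _ | Gen.x _ :: _ | Gen.y _ :: _
  | Gen.b :: Gen.a :: _ | Gen.b :: Gen.b :: _ | Gen.b :: Gen.c :: _ | Gen.b :: Gen.d :: _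
  | Gen.b :: Gen.f :: _ => exact Or.inr (Or.inr (by simp))
  | Gen.b :: Gen.x n :: t => exact Or.inl ⟨n, t, rfl, by simp⟩
  | Gen.b :: Gen.y n :: t => exact Or.inr (Or.inl ⟨n, t, rfl, by simp⟩)

lemma pre_d_cases (U : List Gen) :
    (∃ n z t, U = Gen.b :: Gen.x n :: z :: t ∧ pre Gen.d U = Gen.b :: Gen.x n :: z :: t) ∨
    ((∀ n z t, U ≠ Gen.b :: Gen.x n :: z :: t) ∧ pre Gen.d U = Gen.d :: U) := by
  match U with
  | [] | [Gen.b] | [Gen.b, Gen.x _]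
  | Gen.a :: _ | Gen.c :: _ | Gen.d :: _ | Gen.f :: _ | Gen.x _ :: _ | Gen.y _ :: _
  | Gen.b :: Gen.a :: _ | Gen.b :: Gen.b :: _ | Gen.b :: Gen.c :: _ | Gen.b :: Gen.d :: _
  | Gen.b :: Gen.f :: _ | Gen.b :: Gen.y _ :: _ => exact Or.inr (by simp)
  | Gen.b :: Gen.x n :: z :: t => exact Or.inl ⟨n, z, t, rfl, by simp⟩

lemma pre_f_cases (U : List Gen) :
    (∃ n z t, U = Gen.b :: Gen.y n :: z :: t ∧ pre Gen.f U = Gen.b :: Gen.y n :: z :: t) ∨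
    ((∀ n z t, U ≠ Gen.b :: Gen.y n :: z :: t) ∧ pre Gen.f U = Gen.f :: U) := by
  match U with
  | [] | [Gen.b] | [Gen.b, Gen.y _]
  | Gen.a :: _ | Gen.c :: _ | Gen.d :: _ | Gen.f :: _ | Gen.x _ :: _ | Gen.y _ :: _
  | Gen.b :: Gen.a :: _ | Gen.b :: Gen.b :: _ | Gen.b :: Gen.c :: _ | Gen.b :: Gen.d :: _
  | Gen.b :: Gen.f :: _ | Gen.b :: Gen.x _ :: _ => exact Or.inr (by simp)
  | Gen.b :: Gen.y n :: z :: t => exact Or.inl ⟨n, z, t, rfl, by simp⟩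

lemma pre_ne_nil (g U) : pre g U ≠ [] := by
  cases g
  case b => simp
  case x n => simp
  case y n => simp
  case a => rcases pre_a_cases U with ⟨n,t,_,h⟩|⟨n,t,_,h⟩|⟨_,_,h⟩ <;> simp [h]
  case c => rcases pre_c_cases U with ⟨n,t,_,h⟩|⟨n,t,_,h⟩|⟨_,_,h⟩ <;> simp [h]
  case d => rcases pre_d_cases U with ⟨n,z,t,_,h⟩|⟨_,h⟩ <;> simp [h]
  case f => rcases pre_f_cases U with ⟨n,z,t,_,h⟩|⟨_,h⟩ <;> simp [h]

lemma pre_injective (g) : Function.Injective (pre g) := by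
  intro U V h
  cases g
  case b => simpa using h
  case x n => simpa using h
  case y n => simpa using h
  case a =>
    rcases pre_a_cases U with ⟨n,t,hU,h1⟩|⟨n,t,hU,h1⟩|⟨hU1,hU2,h1⟩ <;>
      rcases pre_a_cases V with ⟨n',t',hV,h2⟩|⟨n',t',hV,h2⟩|⟨hV1,hV2,h2⟩ <;>
      rw [h1, h2] at h <;> simp_all
  case c =>
    rcases pre_c_cases U with ⟨n,t,hU,h1⟩|⟨n,t,hU,h1⟩|⟨hU1,hU2,h1⟩ <;>
      rcases pre_c_cases V with ⟨n',t',hV,h2⟩|⟨n',t',hV,h2⟩|⟨hV1,hV2,h2⟩ <;>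
      rw [h1, h2] at h <;> simp_all
  case d =>
    rcases pre_d_cases U with ⟨n,z,t,hU,h1⟩|⟨hU1,h1⟩ <;>
      rcases pre_d_cases V with ⟨n',z',t',hV,h2⟩|⟨hV1,h2⟩ <;>
      rw [h1, h2] at h <;> simp_all
  case f =>
    rcases pre_f_cases U with ⟨n,z,t,hU,h1⟩|⟨hU1,h1⟩ <;>
      rcases pre_f_cases V with ⟨n',z',t',hV,h2⟩|⟨hV1,h2⟩ <;>
      rw [h1, h2] at h <;> simp_all

/-- Word of a list of generators in `R`. -/
noncomputable def qL (l : List Gen) : R := qR (FreeMonoid.ofList l)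

@[simp] lemma qL_nil : qL [] = 1 := map_one qR

@[simp] lemma qL_append (l₁ l₂ : List Gen) : qL (l₁ ++ l₂) = qL l₁ * qL l₂ := by
  simp [qL, FreeMonoid.ofList_append, map_mul]

@[simp] lemma qL_cons (g : Gen) (l : List Gen) : qL (g :: l) = gen g * qL l := by
  simp [qL, FreeMonoid.ofList_cons, map_mul]; rfl

lemma qL_surjective : Function.Surjective qL := by
  intro r
  obtain ⟨m, rfl⟩ := Con.mk'_surjective (c := conGen RRel) r
  exact ⟨FreeMonoid.toList m, by simp [qL, FreeMonoid.ofList_toList]; rfl⟩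

lemma qR_rel {u v : FreeMonoid Gen} (h : RRel u v) : qR u = qR v :=
  Con.eq _ |>.mpr (ConGen.Rel.of u v h)

/-- The prepend action as a monoid hom from the free monoid. -/
def preF : FreeMonoid Gen →* Function.End (List Gen) := FreeMonoid.lift (fun g => pre g)

lemma preF_of (g : Gen) : preF (FreeMonoid.of g) = pre g := rfl

lemma preF_apply_cons (g : Gen) (l : List Gen) (U : List Gen) :
    preF (FreeMonoid.ofList (g :: l)) U = pre g (preF (FreeMonoid.ofList l) U) := by
  rw [FreeMonoid.ofList_cons, map_mul]; rfl

lemma preF_apply_mul (u v : FreeMonoid Gen) (U : List Gen) :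
    preF (u * v) U = preF u (preF v U) := by rw [map_mul]; rfl

@[simp] lemma preF_of_apply (g : Gen) (U : List Gen) : preF (FreeMonoid.of g) U = pre g U := rfl

lemma preF_rel : ∀ u v, RRel u v → preF u = preF v := by
  intro u v h
  cases h with
  | abx n => funext U; simp [preF_apply_mul]
  | aby n => funext U; simp [preF_apply_mul]
  | cbx n => funext U; simp [preF_apply_mul]
  | cby n => funext U; simp [preF_apply_mul]
  | dbx n z =>
    funext U
    obtain ⟨g', V, hV⟩ := List.exists_cons_of_ne_nil (pre_ne_nil z U)
    simp [preF_apply_mul, hV]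
  | fby n z =>
    funext U
    obtain ⟨g', V, hV⟩ := List.exists_cons_of_ne_nil (pre_ne_nil z U)
    simp [preF_apply_mul, hV]

/-- The action of `R` on words. -/
def act : R →* Function.End (List Gen) :=
  Con.lift _ preF (Con.conGen_le.mpr fun u v h => (Con.ker_rel _).mpr (preF_rel u v h))

lemma act_qL_cons (g : Gen) (l : List Gen) (U : List Gen) :
    act (qL (g :: l)) U = pre g (act (qL l) U) := by
  simp only [qL, act, Con.lift_mk'] at *; exact preF_apply_cons g l U

@[simp] lemma act_one (U : List Gen) : act 1 U = U := rfl

lemma act_mul (r s : R) (U : List Gen) : act (r * s) U = act r (act s U) := by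
  rw [map_mul]; rfl

lemma act_gen (g : Gen) (U : List Gen) : act (gen g) U = pre g U := rfl

lemma act_qL (l U : List Gen) : act (qL l) U = l.foldr pre U := by
  induction l with
  | nil => simp
  | cons g l ih => rw [act_qL_cons, ih]; rfl

/-- Soundness: the action computes multiplication. -/
lemma qL_pre (g : Gen) (U : List Gen) : qL (pre g U) = gen g * qL U := by
  cases g
  case b => simp
  case x n => simp
  case y n => simp
  case a =>
    rcases pre_a_cases U with ⟨n,t,hU,h⟩|⟨n,t,hU,h⟩|⟨_,_,h⟩
    · rw [h, hU]
      have := qR_rel (RRel.abx n); simp only [map_mul] at this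
      simp only [qL_cons, ← mul_assoc]
      rw [show gen Gen.a * gen Gen.b * gen (Gen.x n) = gen Gen.b * gen (Gen.x n) from this]
    · rw [h, hU]
      have := qR_rel (RRel.aby n); simp only [map_mul] at this
      simp only [qL_cons, ← mul_assoc]
      rw [show gen Gen.b * gen (Gen.y (n+1)) = gen Gen.a * gen Gen.b * gen (Gen.y n) from this.symm]
    · rw [h, qL_cons]
  case c =>
    rcases pre_c_cases U with ⟨n,t,hU,h⟩|⟨n,t,hU,h⟩|⟨_,_,h⟩
    · rw [h, hU]
      have := qR_rel (RRel.cbx n); simp only [map_mul] at this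
      simp only [qL_cons, ← mul_assoc]
      rw [show gen Gen.b * gen (Gen.x (n+1)) = gen Gen.c * gen Gen.b * gen (Gen.x n) from this.symm]
    · rw [h, hU]
      have := qR_rel (RRel.cby n); simp only [map_mul] at this
      simp only [qL_cons, ← mul_assoc]
      rw [show gen Gen.c * gen Gen.b * gen (Gen.y n) = gen Gen.b * gen (Gen.y n) from this]
    · rw [h, qL_cons]
  case d =>
    rcases pre_d_cases U with ⟨n,z,t,hU,h⟩|⟨_,h⟩
    · rw [h, hU]
      have := qR_rel (RRel.dbx n z); simp only [map_mul] at this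
      simp only [qL_cons, ← mul_assoc]
      rw [show gen Gen.d * gen Gen.b * gen (Gen.x n) * gen z = gen Gen.b * gen (Gen.x n) * gen z
        from this]
    · rw [h, qL_cons]
  case f =>
    rcases pre_f_cases U with ⟨n,z,t,hU,h⟩|⟨_,h⟩
    · rw [h, hU]
      have := qR_rel (RRel.fby n z); simp only [map_mul] at this
      simp only [qL_cons, ← mul_assoc]
      rw [show gen Gen.f * gen Gen.b * gen (Gen.y n) * gen z = gen Gen.b * gen (Gen.y n) * gen z
        from this]
    · rw [h, qL_cons]

lemma qL_act (r : R) (U : List Gen) : qL (act r U) = r * qL U := by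
  obtain ⟨l, rfl⟩ := qL_surjective r
  induction l with
  | nil => simp
  | cons g l ih => rw [act_qL_cons, qL_pre, ih, qL_cons, mul_assoc]

/-- Normal form of an element. -/
noncomputable def nf (r : R) : List Gen := act r []

lemma nf_mul (r s : R) : nf (r * s) = act r (nf s) := act_mul r s []

@[simp] lemma qL_nf (r : R) : qL (nf r) = r := by
  simpa [nf] using qL_act r []

lemma nf_injective : Function.Injective nf := fun r s h => by
  rw [← qL_nf r, ← qL_nf s, h]

lemma act_injective (r : R) : Function.Injective (act r) := by
  obtain ⟨l, rfl⟩ := qL_surjective r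
  induction l with
  | nil => intro U V h; simpa using h
  | cons g l ih =>
    intro U V h
    rw [act_qL_cons, act_qL_cons] at h
    exact ih (pre_injective g h)

lemma R_left_cancel {a u v : R} (h : a * u = a * v) : u = v := by
  have : act a (nf u) = act a (nf v) := by rw [← nf_mul, ← nf_mul, h]
  exact nf_injective (act_injective a this)

@[simp] lemma nf_one : nf 1 = [] := rfl

lemma nf_eq_nil_iff {r : R} : nf r = [] ↔ r = 1 :=
  ⟨fun h => by rw [← qL_nf r, h, qL_nil], fun h => by rw [h]; rfl⟩

lemma mul_ne_one {w u : R} (hw : w ≠ 1) : w * u ≠ 1 := by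
  intro h
  obtain ⟨l, rfl⟩ := qL_surjective w
  rcases l with _ | ⟨g, l⟩
  · exact hw (by simp)
  · have : nf (qL (g :: l) * u) = [] := by rw [h]; rfl
    rw [nf_mul, act_qL_cons] at this
    exact pre_ne_nil _ _ this

/-! ### Uniform behaviour of left multiplication on `x`/`y`-families -/

lemma tailstepX (g : Gen) (A : List Gen) :
    ∃ A' δ, ∀ n (T : List Gen), T ≠ [] →
      pre g (A ++ Gen.x n :: T) = A' ++ Gen.x (n + δ) :: T := by
  match g, A with
  | Gen.b, A => exact ⟨Gen.b :: A, 0, fun n T _ => by simp⟩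
  | Gen.x j, A => exact ⟨Gen.x j :: A, 0, fun n T _ => by simp⟩
  | Gen.y j, A => exact ⟨Gen.y j :: A, 0, fun n T _ => by simp⟩
  | Gen.a, [] => exact ⟨[Gen.a], 0, fun n T _ => by simp⟩
  | Gen.a, [Gen.b] => exact ⟨[Gen.b], 0, fun n T _ => by simp⟩
  | Gen.a, Gen.b :: Gen.x j :: A => exact ⟨Gen.b :: Gen.x j :: A, 0, fun n T _ => by simp⟩
  | Gen.a, Gen.b :: Gen.y j :: A => exact ⟨Gen.b :: Gen.y (j+1) :: A, 0, fun n T _ => by simp⟩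
  | Gen.a, Gen.b :: Gen.a :: A => exact ⟨Gen.a :: Gen.b :: Gen.a :: A, 0, fun n T _ => by simp⟩
  | Gen.a, Gen.b :: Gen.b :: A => exact ⟨Gen.a :: Gen.b :: Gen.b :: A, 0, fun n T _ => by simp⟩
  | Gen.a, Gen.b :: Gen.c :: A => exact ⟨Gen.a :: Gen.b :: Gen.c :: A, 0, fun n T _ => by simp⟩
  | Gen.a, Gen.b :: Gen.d :: A => exact ⟨Gen.a :: Gen.b :: Gen.d :: A, 0, fun n T _ => by simp⟩
  | Gen.a, Gen.b :: Gen.f :: A => exact ⟨Gen.a :: Gen.b :: Gen.f :: A, 0, fun n T _ => by simp⟩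
  | Gen.a, Gen.a :: A => exact ⟨Gen.a :: Gen.a :: A, 0, fun n T _ => by simp⟩
  | Gen.a, Gen.c :: A => exact ⟨Gen.a :: Gen.c :: A, 0, fun n T _ => by simp⟩
  | Gen.a, Gen.d :: A => exact ⟨Gen.a :: Gen.d :: A, 0, fun n T _ => by simp⟩
  | Gen.a, Gen.f :: A => exact ⟨Gen.a :: Gen.f :: A, 0, fun n T _ => by simp⟩
  | Gen.a, Gen.x j :: A => exact ⟨Gen.a :: Gen.x j :: A, 0, fun n T _ => by simp⟩
  | Gen.a, Gen.y j :: A => exact ⟨Gen.a :: Gen.y j :: A, 0, fun n T _ => by simp⟩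
  | Gen.c, [] => exact ⟨[Gen.c], 0, fun n T _ => by simp⟩
  | Gen.c, [Gen.b] => exact ⟨[Gen.b], 1, fun n T _ => by simp⟩
  | Gen.c, Gen.b :: Gen.x j :: A => exact ⟨Gen.b :: Gen.x (j+1) :: A, 0, fun n T _ => by simp⟩
  | Gen.c, Gen.b :: Gen.y j :: A => exact ⟨Gen.b :: Gen.y j :: A, 0, fun n T _ => by simp⟩
  | Gen.c, Gen.b :: Gen.a :: A => exact ⟨Gen.c :: Gen.b :: Gen.a :: A, 0, fun n T _ => by simp⟩
  | Gen.c, Gen.b :: Gen.b :: A => exact ⟨Gen.c :: Gen.b :: Gen.b :: A, 0, fun n T _ => by simp⟩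
  | Gen.c, Gen.b :: Gen.c :: A => exact ⟨Gen.c :: Gen.b :: Gen.c :: A, 0, fun n T _ => by simp⟩
  | Gen.c, Gen.b :: Gen.d :: A => exact ⟨Gen.c :: Gen.b :: Gen.d :: A, 0, fun n T _ => by simp⟩
  | Gen.c, Gen.b :: Gen.f :: A => exact ⟨Gen.c :: Gen.b :: Gen.f :: A, 0, fun n T _ => by simp⟩
  | Gen.c, Gen.a :: A => exact ⟨Gen.c :: Gen.a :: A, 0, fun n T _ => by simp⟩
  | Gen.c, Gen.c :: A => exact ⟨Gen.c :: Gen.c :: A, 0, fun n T _ => by simp⟩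
  | Gen.c, Gen.d :: A => exact ⟨Gen.c :: Gen.d :: A, 0, fun n T _ => by simp⟩
  | Gen.c, Gen.f :: A => exact ⟨Gen.c :: Gen.f :: A, 0, fun n T _ => by simp⟩
  | Gen.c, Gen.x j :: A => exact ⟨Gen.c :: Gen.x j :: A, 0, fun n T _ => by simp⟩
  | Gen.c, Gen.y j :: A => exact ⟨Gen.c :: Gen.y j :: A, 0, fun n T _ => by simp⟩
  | Gen.d, [] => exact ⟨[Gen.d], 0, fun n T _ => by simp⟩
  | Gen.d, [Gen.b] =>
    refine ⟨[Gen.b], 0, fun n T hT => ?_⟩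
    obtain ⟨z, t, rfl⟩ := List.exists_cons_of_ne_nil hT
    simp
  | Gen.d, Gen.b :: Gen.x j :: A =>
    refine ⟨Gen.b :: Gen.x j :: A, 0, fun n T hT => ?_⟩
    rcases A with _ | ⟨z, A⟩ <;> simp
  | Gen.d, Gen.b :: Gen.y j :: A => exact ⟨Gen.d :: Gen.b :: Gen.y j :: A, 0, fun n T _ => by simp⟩
  | Gen.d, Gen.b :: Gen.a :: A => exact ⟨Gen.d :: Gen.b :: Gen.a :: A, 0, fun n T _ => by simp⟩
  | Gen.d, Gen.b :: Gen.b :: A => exact ⟨Gen.d :: Gen.b :: Gen.b :: A, 0, fun n T _ => by simp⟩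
  | Gen.d, Gen.b :: Gen.c :: A => exact ⟨Gen.d :: Gen.b :: Gen.c :: A, 0, fun n T _ => by simp⟩
  | Gen.d, Gen.b :: Gen.d :: A => exact ⟨Gen.d :: Gen.b :: Gen.d :: A, 0, fun n T _ => by simp⟩
  | Gen.d, Gen.b :: Gen.f :: A => exact ⟨Gen.d :: Gen.b :: Gen.f :: A, 0, fun n T _ => by simp⟩
  | Gen.d, Gen.a :: A => exact ⟨Gen.d :: Gen.a :: A, 0, fun n T _ => by simp⟩
  | Gen.d, Gen.c :: A => exact ⟨Gen.d :: Gen.c :: A, 0, fun n T _ => by simp⟩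
  | Gen.d, Gen.d :: A => exact ⟨Gen.d :: Gen.d :: A, 0, fun n T _ => by simp⟩
  | Gen.d, Gen.f :: A => exact ⟨Gen.d :: Gen.f :: A, 0, fun n T _ => by simp⟩
  | Gen.d, Gen.x j :: A => exact ⟨Gen.d :: Gen.x j :: A, 0, fun n T _ => by simp⟩
  | Gen.d, Gen.y j :: A => exact ⟨Gen.d :: Gen.y j :: A, 0, fun n T _ => by simp⟩
  | Gen.f, [] => exact ⟨[Gen.f], 0, fun n T _ => by simp⟩
  | Gen.f, [Gen.b] => exact ⟨[Gen.f, Gen.b], 0, fun n T _ => by simp⟩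
  | Gen.f, Gen.b :: Gen.y j :: A =>
    refine ⟨Gen.b :: Gen.y j :: A, 0, fun n T hT => ?_⟩
    rcases A with _ | ⟨z, A⟩ <;> simp
  | Gen.f, Gen.b :: Gen.x j :: A => exact ⟨Gen.f :: Gen.b :: Gen.x j :: A, 0, fun n T _ => by simp⟩
  | Gen.f, Gen.b :: Gen.a :: A => exact ⟨Gen.f :: Gen.b :: Gen.a :: A, 0, fun n T _ => by simp⟩
  | Gen.f, Gen.b :: Gen.b :: A => exact ⟨Gen.f :: Gen.b :: Gen.b :: A, 0, fun n T _ => by simp⟩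
  | Gen.f, Gen.b :: Gen.c :: A => exact ⟨Gen.f :: Gen.b :: Gen.c :: A, 0, fun n T _ => by simp⟩
  | Gen.f, Gen.b :: Gen.d :: A => exact ⟨Gen.f :: Gen.b :: Gen.d :: A, 0, fun n T _ => by simp⟩
  | Gen.f, Gen.b :: Gen.f :: A => exact ⟨Gen.f :: Gen.b :: Gen.f :: A, 0, fun n T _ => by simp⟩
  | Gen.f, Gen.a :: A => exact ⟨Gen.f :: Gen.a :: A, 0, fun n T _ => by simp⟩
  | Gen.f, Gen.c :: A => exact ⟨Gen.f :: Gen.c :: A, 0, fun n T _ => by simp⟩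
  | Gen.f, Gen.d :: A => exact ⟨Gen.f :: Gen.d :: A, 0, fun n T _ => by simp⟩
  | Gen.f, Gen.f :: A => exact ⟨Gen.f :: Gen.f :: A, 0, fun n T _ => by simp⟩
  | Gen.f, Gen.x j :: A => exact ⟨Gen.f :: Gen.x j :: A, 0, fun n T _ => by simp⟩
  | Gen.f, Gen.y j :: A => exact ⟨Gen.f :: Gen.y j :: A, 0, fun n T _ => by simp⟩

/-! ### The swap symmetry `x ↔ y`, `a ↔ c`, `d ↔ f` -/

def sw : Gen → Gen
  | Gen.a => Gen.c
  | Gen.c => Gen.a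
  | Gen.d => Gen.f
  | Gen.f => Gen.d
  | Gen.b => Gen.b
  | Gen.x n => Gen.y n
  | Gen.y n => Gen.x n

@[simp] lemma sw_sw (g : Gen) : sw (sw g) = g := by cases g <;> rfl

@[simp] lemma sw_comp : sw ∘ sw = id := funext sw_sw

@[simp] lemma map_sw_sw (U : List Gen) : (U.map sw).map sw = U := by
  rw [List.map_map, sw_comp, List.map_id]

lemma map_sw_injective : Function.Injective (List.map sw) := by
  intro U V h
  have := congrArg (List.map sw) h
  rwa [map_sw_sw, map_sw_sw] at this

lemma pre_sw (g : Gen) (U : List Gen) : pre (sw g) (U.map sw) = (pre g U).map sw := by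
  cases g
  case b => simp [sw]
  case x n => simp [sw]
  case y n => simp [sw]
  case a =>
    rcases pre_a_cases U with ⟨n,t,hU,h⟩|⟨n,t,hU,h⟩|⟨h1,h2,h⟩
    · subst hU; simp [h, sw]
    · subst hU; simp [h, sw]
    · rw [h]
      show pre Gen.c (U.map sw) = _
      rcases pre_c_cases (U.map sw) with ⟨n,t,hU',h'⟩|⟨n,t,hU',h'⟩|⟨_,_,h'⟩
      · refine absurd ?_ (h2 n (t.map sw))
        have := congrArg (List.map sw) hU'; rw [map_sw_sw] at this; simpa [sw] using this
      · refine absurd ?_ (h1 n (t.map sw))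
        have := congrArg (List.map sw) hU'; rw [map_sw_sw] at this; simpa [sw] using this
      · rw [h']; simp [sw]
  case c =>
    rcases pre_c_cases U with ⟨n,t,hU,h⟩|⟨n,t,hU,h⟩|⟨h1,h2,h⟩
    · subst hU; simp [h, sw]
    · subst hU; simp [h, sw]
    · rw [h]
      show pre Gen.a (U.map sw) = _
      rcases pre_a_cases (U.map sw) with ⟨n,t,hU',h'⟩|⟨n,t,hU',h'⟩|⟨_,_,h'⟩
      · refine absurd ?_ (h2 n (t.map sw))
        have := congrArg (List.map sw) hU'; rw [map_sw_sw] at this; simpa [sw] using this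
      · refine absurd ?_ (h1 n (t.map sw))
        have := congrArg (List.map sw) hU'; rw [map_sw_sw] at this; simpa [sw] using this
      · rw [h']; simp [sw]
  case d =>
    rcases pre_d_cases U with ⟨n,z,t,hU,h⟩|⟨h1,h⟩
    · subst hU; simp [h, sw]
    · rw [h]
      show pre Gen.f (U.map sw) = _
      rcases pre_f_cases (U.map sw) with ⟨n,z,t,hU',h'⟩|⟨_,h'⟩
      · refine absurd ?_ (h1 n (sw z) (t.map sw))
        have := congrArg (List.map sw) hU'; rw [map_sw_sw] at this; simpa [sw] using this
      · rw [h']; simp [sw]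
  case f =>
    rcases pre_f_cases U with ⟨n,z,t,hU,h⟩|⟨h1,h⟩
    · subst hU; simp [h, sw]
    · rw [h]
      show pre Gen.d (U.map sw) = _
      rcases pre_d_cases (U.map sw) with ⟨n,z,t,hU',h'⟩|⟨_,h'⟩
      · refine absurd ?_ (h1 n (sw z) (t.map sw))
        have := congrArg (List.map sw) hU'; rw [map_sw_sw] at this; simpa [sw] using this
      · rw [h']; simp [sw]

lemma tailstepY (g : Gen) (A : List Gen) :
    ∃ A' δ, ∀ n (T : List Gen), T ≠ [] →
      pre g (A ++ Gen.y n :: T) = A' ++ Gen.y (n + δ) :: T := by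
  obtain ⟨A', δ, h⟩ := tailstepX (sw g) (A.map sw)
  refine ⟨A'.map sw, δ, fun n T hT => ?_⟩
  apply map_sw_injective
  have h1 : (pre g (A ++ Gen.y n :: T)).map sw
      = pre (sw g) (A.map sw ++ Gen.x n :: T.map sw) := by
    rw [← pre_sw]; simp [sw]
  have h2 := h n (T.map sw) (by simpa using hT)
  rw [h1, h2]; simp [sw, map_sw_sw]

lemma barestep (g : Gen) (C : List Gen) :
    ∃ C' δx δy, ∀ n : ℤ,
      pre g (C ++ [Gen.x n]) = C' ++ [Gen.x (n + δx)] ∧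
      pre g (C ++ [Gen.y n]) = C' ++ [Gen.y (n + δy)] := by
  match g, C with
  | Gen.b, C => exact ⟨Gen.b :: C, 0, 0, fun n => by simp⟩
  | Gen.x j, C => exact ⟨Gen.x j :: C, 0, 0, fun n => by simp⟩
  | Gen.y j, C => exact ⟨Gen.y j :: C, 0, 0, fun n => by simp⟩
  | Gen.a, [] => exact ⟨[Gen.a], 0, 0, fun n => by simp⟩
  | Gen.a, [Gen.b] => exact ⟨[Gen.b], 0, 1, fun n => by simp⟩
  | Gen.a, Gen.b :: Gen.x j :: C => exact ⟨Gen.b :: Gen.x j :: C, 0, 0, fun n => by simp⟩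
  | Gen.a, Gen.b :: Gen.y j :: C => exact ⟨Gen.b :: Gen.y (j+1) :: C, 0, 0, fun n => by simp⟩
  | Gen.a, Gen.b :: Gen.a :: C => exact ⟨Gen.a :: Gen.b :: Gen.a :: C, 0, 0, fun n => by simp⟩
  | Gen.a, Gen.b :: Gen.b :: C => exact ⟨Gen.a :: Gen.b :: Gen.b :: C, 0, 0, fun n => by simp⟩
  | Gen.a, Gen.b :: Gen.c :: C => exact ⟨Gen.a :: Gen.b :: Gen.c :: C, 0, 0, fun n => by simp⟩
  | Gen.a, Gen.b :: Gen.d :: C => exact ⟨Gen.a :: Gen.b :: Gen.d :: C, 0, 0, fun n => by simp⟩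
  | Gen.a, Gen.b :: Gen.f :: C => exact ⟨Gen.a :: Gen.b :: Gen.f :: C, 0, 0, fun n => by simp⟩
  | Gen.a, Gen.a :: C => exact ⟨Gen.a :: Gen.a :: C, 0, 0, fun n => by simp⟩
  | Gen.a, Gen.c :: C => exact ⟨Gen.a :: Gen.c :: C, 0, 0, fun n => by simp⟩
  | Gen.a, Gen.d :: C => exact ⟨Gen.a :: Gen.d :: C, 0, 0, fun n => by simp⟩
  | Gen.a, Gen.f :: C => exact ⟨Gen.a :: Gen.f :: C, 0, 0, fun n => by simp⟩
  | Gen.a, Gen.x j :: C => exact ⟨Gen.a :: Gen.x j :: C, 0, 0, fun n => by simp⟩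
  | Gen.a, Gen.y j :: C => exact ⟨Gen.a :: Gen.y j :: C, 0, 0, fun n => by simp⟩
  | Gen.c, [] => exact ⟨[Gen.c], 0, 0, fun n => by simp⟩
  | Gen.c, [Gen.b] => exact ⟨[Gen.b], 1, 0, fun n => by simp⟩
  | Gen.c, Gen.b :: Gen.x j :: C => exact ⟨Gen.b :: Gen.x (j+1) :: C, 0, 0, fun n => by simp⟩
  | Gen.c, Gen.b :: Gen.y j :: C => exact ⟨Gen.b :: Gen.y j :: C, 0, 0, fun n => by simp⟩
  | Gen.c, Gen.b :: Gen.a :: C => exact ⟨Gen.c :: Gen.b :: Gen.a :: C, 0, 0, fun n => by simp⟩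
  | Gen.c, Gen.b :: Gen.b :: C => exact ⟨Gen.c :: Gen.b :: Gen.b :: C, 0, 0, fun n => by simp⟩
  | Gen.c, Gen.b :: Gen.c :: C => exact ⟨Gen.c :: Gen.b :: Gen.c :: C, 0, 0, fun n => by simp⟩
  | Gen.c, Gen.b :: Gen.d :: C => exact ⟨Gen.c :: Gen.b :: Gen.d :: C, 0, 0, fun n => by simp⟩
  | Gen.c, Gen.b :: Gen.f :: C => exact ⟨Gen.c :: Gen.b :: Gen.f :: C, 0, 0, fun n => by simp⟩
  | Gen.c, Gen.a :: C => exact ⟨Gen.c :: Gen.a :: C, 0, 0, fun n => by simp⟩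
  | Gen.c, Gen.c :: C => exact ⟨Gen.c :: Gen.c :: C, 0, 0, fun n => by simp⟩
  | Gen.c, Gen.d :: C => exact ⟨Gen.c :: Gen.d :: C, 0, 0, fun n => by simp⟩
  | Gen.c, Gen.f :: C => exact ⟨Gen.c :: Gen.f :: C, 0, 0, fun n => by simp⟩
  | Gen.c, Gen.x j :: C => exact ⟨Gen.c :: Gen.x j :: C, 0, 0, fun n => by simp⟩
  | Gen.c, Gen.y j :: C => exact ⟨Gen.c :: Gen.y j :: C, 0, 0, fun n => by simp⟩
  | Gen.d, [] => exact ⟨[Gen.d], 0, 0, fun n => by simp⟩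
  | Gen.d, [Gen.b] => exact ⟨[Gen.d, Gen.b], 0, 0, fun n => by simp⟩
  | Gen.d, Gen.b :: Gen.x j :: C =>
    refine ⟨Gen.b :: Gen.x j :: C, 0, 0, fun n => ?_⟩
    rcases C with _ | ⟨z, C⟩ <;> simp
  | Gen.d, Gen.b :: Gen.y j :: C => exact ⟨Gen.d :: Gen.b :: Gen.y j :: C, 0, 0, fun n => by simp⟩
  | Gen.d, Gen.b :: Gen.a :: C => exact ⟨Gen.d :: Gen.b :: Gen.a :: C, 0, 0, fun n => by simp⟩
  | Gen.d, Gen.b :: Gen.b :: C => exact ⟨Gen.d :: Gen.b :: Gen.b :: C, 0, 0, fun n => by simp⟩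
  | Gen.d, Gen.b :: Gen.c :: C => exact ⟨Gen.d :: Gen.b :: Gen.c :: C, 0, 0, fun n => by simp⟩
  | Gen.d, Gen.b :: Gen.d :: C => exact ⟨Gen.d :: Gen.b :: Gen.d :: C, 0, 0, fun n => by simp⟩
  | Gen.d, Gen.b :: Gen.f :: C => exact ⟨Gen.d :: Gen.b :: Gen.f :: C, 0, 0, fun n => by simp⟩
  | Gen.d, Gen.a :: C => exact ⟨Gen.d :: Gen.a :: C, 0, 0, fun n => by simp⟩
  | Gen.d, Gen.c :: C => exact ⟨Gen.d :: Gen.c :: C, 0, 0, fun n => by simp⟩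
  | Gen.d, Gen.d :: C => exact ⟨Gen.d :: Gen.d :: C, 0, 0, fun n => by simp⟩
  | Gen.d, Gen.f :: C => exact ⟨Gen.d :: Gen.f :: C, 0, 0, fun n => by simp⟩
  | Gen.d, Gen.x j :: C => exact ⟨Gen.d :: Gen.x j :: C, 0, 0, fun n => by simp⟩
  | Gen.d, Gen.y j :: C => exact ⟨Gen.d :: Gen.y j :: C, 0, 0, fun n => by simp⟩
  | Gen.f, [] => exact ⟨[Gen.f], 0, 0, fun n => by simp⟩
  | Gen.f, [Gen.b] => exact ⟨[Gen.f, Gen.b], 0, 0, fun n => by simp⟩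
  | Gen.f, Gen.b :: Gen.y j :: C =>
    refine ⟨Gen.b :: Gen.y j :: C, 0, 0, fun n => ?_⟩
    rcases C with _ | ⟨z, C⟩ <;> simp
  | Gen.f, Gen.b :: Gen.x j :: C => exact ⟨Gen.f :: Gen.b :: Gen.x j :: C, 0, 0, fun n => by simp⟩
  | Gen.f, Gen.b :: Gen.a :: C => exact ⟨Gen.f :: Gen.b :: Gen.a :: C, 0, 0, fun n => by simp⟩
  | Gen.f, Gen.b :: Gen.b :: C => exact ⟨Gen.f :: Gen.b :: Gen.b :: C, 0, 0, fun n => by simp⟩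
  | Gen.f, Gen.b :: Gen.c :: C => exact ⟨Gen.f :: Gen.b :: Gen.c :: C, 0, 0, fun n => by simp⟩
  | Gen.f, Gen.b :: Gen.d :: C => exact ⟨Gen.f :: Gen.b :: Gen.d :: C, 0, 0, fun n => by simp⟩
  | Gen.f, Gen.b :: Gen.f :: C => exact ⟨Gen.f :: Gen.b :: Gen.f :: C, 0, 0, fun n => by simp⟩
  | Gen.f, Gen.a :: C => exact ⟨Gen.f :: Gen.a :: C, 0, 0, fun n => by simp⟩
  | Gen.f, Gen.c :: C => exact ⟨Gen.f :: Gen.c :: C, 0, 0, fun n => by simp⟩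
  | Gen.f, Gen.d :: C => exact ⟨Gen.f :: Gen.d :: C, 0, 0, fun n => by simp⟩
  | Gen.f, Gen.f :: C => exact ⟨Gen.f :: Gen.f :: C, 0, 0, fun n => by simp⟩
  | Gen.f, Gen.x j :: C => exact ⟨Gen.f :: Gen.x j :: C, 0, 0, fun n => by simp⟩
  | Gen.f, Gen.y j :: C => exact ⟨Gen.f :: Gen.y j :: C, 0, 0, fun n => by simp⟩

/-- Structure of left multiplication on the families `x_n·T`, `y_n·T`, `x_n`, `y_n`. -/
lemma struct (r : R) :
    ∃ (Ax Ay C : List Gen) (jx jy kx ky : ℤ), ∀ n (T : List Gen),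
      (T ≠ [] → act r (Gen.x n :: T) = Ax ++ Gen.x (n + jx) :: T) ∧
      (T ≠ [] → act r (Gen.y n :: T) = Ay ++ Gen.y (n + jy) :: T) ∧
      act r [Gen.x n] = C ++ [Gen.x (n + kx)] ∧
      act r [Gen.y n] = C ++ [Gen.y (n + ky)] := by
  obtain ⟨l, rfl⟩ := qL_surjective r
  induction l with
  | nil =>
    exact ⟨[], [], [], 0, 0, 0, 0, fun n T => by simp⟩
  | cons g l ih =>
    obtain ⟨Ax, Ay, C, jx, jy, kx, ky, ih⟩ := ih
    obtain ⟨Ax', δx, hAx⟩ := tailstepX g Ax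
    obtain ⟨Ay', δy, hAy⟩ := tailstepY g Ay
    obtain ⟨C', εx, εy, hC⟩ := barestep g C
    refine ⟨Ax', Ay', C', jx + δx, jy + δy, kx + εx, ky + εy, fun n T => ?_⟩
    obtain ⟨ihx, ihy, ihbx, ihby⟩ := ih n T
    refine ⟨fun hT => ?_, fun hT => ?_, ?_, ?_⟩
    · rw [act_qL_cons, ihx hT, hAx _ _ hT, add_assoc]
    · rw [act_qL_cons, ihy hT, hAy _ _ hT, add_assoc]
    · rw [act_qL_cons, ihbx, (hC _).1, add_assoc]
    · rw [act_qL_cons, ihby, (hC _).2, add_assoc]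

/-! ### Division lemmas -/

/-- Trigger for the tail-family division lemma. -/
def W1trig (Q A : List Gen) : Prop :=
  ∃ (m₁ m₂ : ℤ) (T₁ T₂ U₁ U₂ : List Gen), m₁ ≠ m₂ ∧ T₁ ≠ [] ∧ T₂ ≠ [] ∧
    List.foldr pre U₁ Q = A ++ Gen.x m₁ :: T₁ ∧
    List.foldr pre U₂ Q = A ++ Gen.x m₂ :: T₂

/-- Conclusion of the tail-family division lemma. -/
def W1conc (Q A : List Gen) : Prop :=
  ∃ (E : List Gen) (k : ℤ), ∀ (m : ℤ) (T : List Gen), T ≠ [] →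
    List.foldr pre (E ++ Gen.x (m + k) :: T) Q = A ++ Gen.x m :: T

lemma W1 : ∀ (Q A : List Gen), W1trig Q A → W1conc Q A := by
  intro Q
  induction Q with
  | nil =>
    intro A _
    exact ⟨A, 0, fun m T hT => by simp⟩
  | cons g Q ih =>
    intro A htrig
    obtain ⟨m₁, m₂, T₁, T₂, U₁, U₂, hm, hT1, hT2, h₁, h₂⟩ := htrig
    simp only [List.foldr_cons] at h₁ h₂
    set W₁ := List.foldr pre U₁ Q with hW₁def
    set W₂ := List.foldr pre U₂ Q with hW₂def
    rcases A with _ | ⟨A₀, A'⟩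
    · -- A = [] : impossible trigger
      exfalso
      cases g
      case b => simp at h₁
      case x j =>
        simp only [pre_x, List.nil_append, List.cons.injEq, Gen.x.injEq] at h₁ h₂
        exact hm (h₁.1 ▸ h₂.1 ▸ rfl)
      case y j => simp at h₁
      case a =>
        rcases pre_a_cases W₁ with ⟨n,t,hW,h⟩|⟨n,t,hW,h⟩|⟨_,_,h⟩ <;> rw [h] at h₁ <;> simp at h₁
      case c =>
        rcases pre_c_cases W₁ with ⟨n,t,hW,h⟩|⟨n,t,hW,h⟩|⟨_,_,h⟩ <;> rw [h] at h₁ <;> simp at h₁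
      case d =>
        rcases pre_d_cases W₁ with ⟨n,z,t,hW,h⟩|⟨_,h⟩ <;> rw [h] at h₁ <;> simp at h₁
      case f =>
        rcases pre_f_cases W₁ with ⟨n,z,t,hW,h⟩|⟨_,h⟩ <;> rw [h] at h₁ <;> simp at h₁
    · cases g
      case b =>
        simp only [pre_b, List.cons_append, List.cons.injEq] at h₁ h₂
        obtain ⟨hA₀, hWe₁⟩ := h₁
        obtain ⟨-, hWe₂⟩ := h₂
        subst hA₀
        obtain ⟨E, k, hE⟩ := ih A' ⟨m₁, m₂, T₁, T₂, U₁, U₂, hm, hT1, hT2, hWe₁, hWe₂⟩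
        exact ⟨E, k, fun m T hT => by
          simp only [List.foldr_cons, hE m T hT, pre_b, List.cons_append]⟩
      case x j =>
        simp only [pre_x, List.cons_append, List.cons.injEq] at h₁ h₂
        obtain ⟨hA₀, hWe₁⟩ := h₁
        obtain ⟨-, hWe₂⟩ := h₂
        subst hA₀
        obtain ⟨E, k, hE⟩ := ih A' ⟨m₁, m₂, T₁, T₂, U₁, U₂, hm, hT1, hT2, hWe₁, hWe₂⟩
        exact ⟨E, k, fun m T hT => by
          simp only [List.foldr_cons, hE m T hT, pre_x, List.cons_append]⟩
      case y j =>
        simp only [pre_y, List.cons_append, List.cons.injEq] at h₁ h₂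
        obtain ⟨hA₀, hWe₁⟩ := h₁
        obtain ⟨-, hWe₂⟩ := h₂
        subst hA₀
        obtain ⟨E, k, hE⟩ := ih A' ⟨m₁, m₂, T₁, T₂, U₁, U₂, hm, hT1, hT2, hWe₁, hWe₂⟩
        exact ⟨E, k, fun m T hT => by
          simp only [List.foldr_cons, hE m T hT, pre_y, List.cons_append]⟩
      case a =>
        cases A₀
        case a =>
          -- both h₁ h₂ must come from the non-pattern branch
          rcases pre_a_cases W₁ with ⟨n,t,hW,h⟩|⟨n,t,hW,h⟩|⟨hnx₁,hny₁,h⟩ <;> rw [h] at h₁ <;>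
            [simp at h₁; simp at h₁; skip]
          rcases pre_a_cases W₂ with ⟨n,t,hW,h'⟩|⟨n,t,hW,h'⟩|⟨hnx₂,hny₂,h'⟩ <;> rw [h'] at h₂ <;>
            [simp at h₂; simp at h₂; skip]
          simp only [List.cons_append, List.cons.injEq, true_and] at h₁ h₂
          rw [h₁] at hnx₁ hny₁
          obtain ⟨E, k, hE⟩ := ih A' ⟨m₁, m₂, T₁, T₂, U₁, U₂, hm, hT1, hT2, h₁, h₂⟩
          refine ⟨E, k, fun m T hT => ?_⟩
          rw [List.foldr_cons, hE m T hT]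
          -- show pre a (A' ++ x m :: T) = a :: A' ++ x m :: T
          rcases A' with _ | ⟨a₁, A''⟩
          · simp
          cases a₁ <;> try simp
          -- a₁ = b : need to use non-pattern conditions
          case b =>
            rcases A'' with _ | ⟨a₂, A'''⟩
            · exact absurd rfl (hnx₁ m₁ T₁)
            cases a₂ <;> try simp
            · exact absurd rfl (hnx₁ _ _)
            · exact absurd rfl (hny₁ _ _)
        case b =>
          -- both h₁ h₂ must come from pattern branches
          rcases A' with _ | ⟨a₁, A''⟩
          · -- A = [b]; targets b :: x mᵢ :: Tᵢ
            rcases pre_a_cases W₁ with ⟨n,t,hW,h⟩|⟨n,t,hW,h⟩|⟨_,_,h⟩ <;> rw [h] at h₁ <;>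
              [skip; simp at h₁; simp at h₁]
            rcases pre_a_cases W₂ with ⟨n',t',hW',h'⟩|⟨n',t',hW',h'⟩|⟨_,_,h'⟩ <;> rw [h'] at h₂ <;>
              [skip; simp at h₂; simp at h₂]
            rw [h₁] at hW; rw [h₂] at hW'
            obtain ⟨E, k, hE⟩ := ih [Gen.b] ⟨m₁, m₂, T₁, T₂, U₁, U₂, hm, hT1, hT2, by
              simpa using hW, by simpa using hW'⟩
            refine ⟨E, k, fun m T hT => ?_⟩
            rw [List.foldr_cons, show (E ++ Gen.x (m+k) :: T) = E ++ Gen.x (m+k) :: T from rfl,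
              hE m T hT]
            simp
          cases a₁
          case x j =>
            -- targets b :: x j :: (A'' ++ x mᵢ :: Tᵢ) ; identity pattern branch
            rcases pre_a_cases W₁ with ⟨n,t,hW,h⟩|⟨n,t,hW,h⟩|⟨_,_,h⟩ <;> rw [h] at h₁ <;>
              [skip; simp at h₁; simp at h₁]
            rcases pre_a_cases W₂ with ⟨n',t',hW',h'⟩|⟨n',t',hW',h'⟩|⟨_,_,h'⟩ <;> rw [h'] at h₂ <;>
              [skip; simp at h₂; simp at h₂]
            rw [h₁] at hW; rw [h₂] at hW'
            obtain ⟨E, k, hE⟩ := ih (Gen.b :: Gen.x j :: A'')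
              ⟨m₁, m₂, T₁, T₂, U₁, U₂, hm, hT1, hT2, by simpa using hW, by simpa using hW'⟩
            refine ⟨E, k, fun m T hT => ?_⟩
            rw [List.foldr_cons, hE m T hT]
            simp
          case y j =>
            -- targets b :: y j :: (A'' ++ x mᵢ :: Tᵢ) ; shift pattern branch
            rcases pre_a_cases W₁ with ⟨n,t,hW,h⟩|⟨n,t,hW,h⟩|⟨_,_,h⟩ <;> rw [h] at h₁ <;>
              [simp at h₁; skip; simp at h₁]
            rcases pre_a_cases W₂ with ⟨n',t',hW',h'⟩|⟨n',t',hW',h'⟩|⟨_,_,h'⟩ <;> rw [h'] at h₂ <;>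
              [simp at h₂; skip; simp at h₂]
            simp only [List.cons_append, List.cons.injEq, Gen.y.injEq, true_and] at h₁ h₂
            obtain ⟨hn, ht⟩ := h₁
            obtain ⟨hn', ht'⟩ := h₂
            have hn2 : n = j - 1 := by omega
            have hn2' : n' = j - 1 := by omega
            rw [hn2, ht] at hW; rw [hn2', ht'] at hW'
            obtain ⟨E, k, hE⟩ := ih (Gen.b :: Gen.y (j-1) :: A'')
              ⟨m₁, m₂, T₁, T₂, U₁, U₂, hm, hT1, hT2, by simpa using hW, by simpa using hW'⟩
            refine ⟨E, k, fun m T hT => ?_⟩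
            rw [List.foldr_cons, hE m T hT]
            have hj : j - 1 + 1 = j := by omega
            simp [hj]
          all_goals
            exfalso
            rcases pre_a_cases W₁ with ⟨n,t,hW,h⟩|⟨n,t,hW,h⟩|⟨_,_,h⟩ <;> rw [h] at h₁ <;>
              simp at h₁
        all_goals
          exfalso
          rcases pre_a_cases W₁ with ⟨n,t,hW,h⟩|⟨n,t,hW,h⟩|⟨_,_,h⟩ <;> rw [h] at h₁ <;> simp at h₁
      case c =>
        cases A₀
        case c =>
          rcases pre_c_cases W₁ with ⟨n,t,hW,h⟩|⟨n,t,hW,h⟩|⟨hnx₁,hny₁,h⟩ <;> rw [h] at h₁ <;>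
            [simp at h₁; simp at h₁; skip]
          rcases pre_c_cases W₂ with ⟨n,t,hW,h'⟩|⟨n,t,hW,h'⟩|⟨hnx₂,hny₂,h'⟩ <;> rw [h'] at h₂ <;>
            [simp at h₂; simp at h₂; skip]
          simp only [List.cons_append, List.cons.injEq, true_and] at h₁ h₂
          rw [h₁] at hnx₁ hny₁
          obtain ⟨E, k, hE⟩ := ih A' ⟨m₁, m₂, T₁, T₂, U₁, U₂, hm, hT1, hT2, h₁, h₂⟩
          refine ⟨E, k, fun m T hT => ?_⟩
          rw [List.foldr_cons, hE m T hT]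
          rcases A' with _ | ⟨a₁, A''⟩
          · simp
          cases a₁ <;> try simp
          case b =>
            rcases A'' with _ | ⟨a₂, A'''⟩
            · exact absurd rfl (hnx₁ m₁ T₁)
            cases a₂ <;> try simp
            · exact absurd rfl (hnx₁ _ _)
            · exact absurd rfl (hny₁ _ _)
        case b =>
          rcases A' with _ | ⟨a₁, A''⟩
          · -- A = [b]; x-shift branch
            rcases pre_c_cases W₁ with ⟨n,t,hW,h⟩|⟨n,t,hW,h⟩|⟨_,_,h⟩ <;> rw [h] at h₁ <;>
              [skip; simp at h₁; simp at h₁]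
            rcases pre_c_cases W₂ with ⟨n',t',hW',h'⟩|⟨n',t',hW',h'⟩|⟨_,_,h'⟩ <;> rw [h'] at h₂ <;>
              [skip; simp at h₂; simp at h₂]
            simp only [List.singleton_append, List.cons.injEq, Gen.x.injEq, true_and] at h₁ h₂
            obtain ⟨hn, ht⟩ := h₁
            obtain ⟨hn', ht'⟩ := h₂
            have hn2 : n = m₁ - 1 := by omega
            have hn2' : n' = m₂ - 1 := by omega
            rw [hn2, ht] at hW; rw [hn2', ht'] at hW'
            obtain ⟨E, k, hE⟩ := ih [Gen.b]
              ⟨m₁ - 1, m₂ - 1, T₁, T₂, U₁, U₂, by omega, hT1, hT2, by simpa using hW,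
                by simpa using hW'⟩
            refine ⟨E, k - 1, fun m T hT => ?_⟩
            have harith : m + (k - 1) = (m - 1) + k := by ring
            rw [List.foldr_cons, harith, hE (m-1) T hT]
            have hj : m - 1 + 1 = m := by omega
            simp [hj]
          cases a₁
          case x j =>
            rcases pre_c_cases W₁ with ⟨n,t,hW,h⟩|⟨n,t,hW,h⟩|⟨_,_,h⟩ <;> rw [h] at h₁ <;>
              [skip; simp at h₁; simp at h₁]
            rcases pre_c_cases W₂ with ⟨n',t',hW',h'⟩|⟨n',t',hW',h'⟩|⟨_,_,h'⟩ <;> rw [h'] at h₂ <;>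
              [skip; simp at h₂; simp at h₂]
            simp only [List.cons_append, List.cons.injEq, Gen.x.injEq, true_and] at h₁ h₂
            obtain ⟨hn, ht⟩ := h₁
            obtain ⟨hn', ht'⟩ := h₂
            have hn2 : n = j - 1 := by omega
            have hn2' : n' = j - 1 := by omega
            rw [hn2, ht] at hW; rw [hn2', ht'] at hW'
            obtain ⟨E, k, hE⟩ := ih (Gen.b :: Gen.x (j-1) :: A'')
              ⟨m₁, m₂, T₁, T₂, U₁, U₂, hm, hT1, hT2, by simpa using hW, by simpa using hW'⟩
            refine ⟨E, k, fun m T hT => ?_⟩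
            rw [List.foldr_cons, hE m T hT]
            have hj : j - 1 + 1 = j := by omega
            simp [hj]
          case y j =>
            rcases pre_c_cases W₁ with ⟨n,t,hW,h⟩|⟨n,t,hW,h⟩|⟨_,_,h⟩ <;> rw [h] at h₁ <;>
              [simp at h₁; skip; simp at h₁]
            rcases pre_c_cases W₂ with ⟨n',t',hW',h'⟩|⟨n',t',hW',h'⟩|⟨_,_,h'⟩ <;> rw [h'] at h₂ <;>
              [simp at h₂; skip; simp at h₂]
            rw [h₁] at hW; rw [h₂] at hW'
            obtain ⟨E, k, hE⟩ := ih (Gen.b :: Gen.y j :: A'')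
              ⟨m₁, m₂, T₁, T₂, U₁, U₂, hm, hT1, hT2, by simpa using hW, by simpa using hW'⟩
            refine ⟨E, k, fun m T hT => ?_⟩
            rw [List.foldr_cons, hE m T hT]
            simp
          all_goals
            exfalso
            rcases pre_c_cases W₁ with ⟨n,t,hW,h⟩|⟨n,t,hW,h⟩|⟨_,_,h⟩ <;> rw [h] at h₁ <;>
              simp at h₁
        all_goals
          exfalso
          rcases pre_c_cases W₁ with ⟨n,t,hW,h⟩|⟨n,t,hW,h⟩|⟨_,_,h⟩ <;> rw [h] at h₁ <;> simp at h₁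
      case d =>
        cases A₀
        case d =>
          rcases pre_d_cases W₁ with ⟨n,z,t,hW,h⟩|⟨hnd₁,h⟩ <;> rw [h] at h₁ <;>
            [simp at h₁; skip]
          rcases pre_d_cases W₂ with ⟨n,z,t,hW,h'⟩|⟨hnd₂,h'⟩ <;> rw [h'] at h₂ <;>
            [simp at h₂; skip]
          simp only [List.cons_append, List.cons.injEq, true_and] at h₁ h₂
          rw [h₁] at hnd₁
          obtain ⟨E, k, hE⟩ := ih A' ⟨m₁, m₂, T₁, T₂, U₁, U₂, hm, hT1, hT2, h₁, h₂⟩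
          refine ⟨E, k, fun m T hT => ?_⟩
          rw [List.foldr_cons, hE m T hT]
          rcases A' with _ | ⟨a₁, A''⟩
          · simp
          cases a₁ <;> try simp
          case b =>
            rcases A'' with _ | ⟨a₂, A'''⟩
            · obtain ⟨z, t, rfl⟩ := List.exists_cons_of_ne_nil hT1
              exact absurd rfl (hnd₁ m₁ z t)
            cases a₂ <;> try simp
            case x jj =>
              rcases A''' with _ | ⟨z3, A4⟩
              · exact absurd rfl (hnd₁ jj _ _)
              · exact absurd rfl (hnd₁ jj _ _)
        case b =>
          rcases A' with _ | ⟨a₁, A''⟩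
          · -- A = [b]; pattern branch with z from T
            rcases pre_d_cases W₁ with ⟨n,z,t,hW,h⟩|⟨_,h⟩ <;> rw [h] at h₁ <;>
              [skip; simp at h₁]
            rcases pre_d_cases W₂ with ⟨n',z',t',hW',h'⟩|⟨_,h'⟩ <;> rw [h'] at h₂ <;>
              [skip; simp at h₂]
            rw [h₁] at hW; rw [h₂] at hW'
            obtain ⟨E, k, hE⟩ := ih [Gen.b]
              ⟨m₁, m₂, T₁, T₂, U₁, U₂, hm, hT1, hT2, by simpa using hW, by simpa using hW'⟩
            refine ⟨E, k, fun m T hT => ?_⟩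
            rw [List.foldr_cons, hE m T hT]
            obtain ⟨z, t, rfl⟩ := List.exists_cons_of_ne_nil hT
            simp
          cases a₁
          case x j =>
            rcases pre_d_cases W₁ with ⟨n,z,t,hW,h⟩|⟨_,h⟩ <;> rw [h] at h₁ <;>
              [skip; simp at h₁]
            rcases pre_d_cases W₂ with ⟨n',z',t',hW',h'⟩|⟨_,h'⟩ <;> rw [h'] at h₂ <;>
              [skip; simp at h₂]
            rw [h₁] at hW; rw [h₂] at hW'
            obtain ⟨E, k, hE⟩ := ih (Gen.b :: Gen.x j :: A'')
              ⟨m₁, m₂, T₁, T₂, U₁, U₂, hm, hT1, hT2, by simpa using hW, by simpa using hW'⟩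
            refine ⟨E, k, fun m T hT => ?_⟩
            rw [List.foldr_cons, hE m T hT]
            rcases A'' with _ | ⟨a₂, A'''⟩ <;> simp
          all_goals
            exfalso
            rcases pre_d_cases W₁ with ⟨n,z,t,hW,h⟩|⟨_,h⟩ <;> rw [h] at h₁ <;> simp at h₁
        all_goals
          exfalso
          rcases pre_d_cases W₁ with ⟨n,z,t,hW,h⟩|⟨_,h⟩ <;> rw [h] at h₁ <;> simp at h₁
      case f =>
        cases A₀
        case f =>
          rcases pre_f_cases W₁ with ⟨n,z,t,hW,h⟩|⟨hnd₁,h⟩ <;> rw [h] at h₁ <;>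
            [simp at h₁; skip]
          rcases pre_f_cases W₂ with ⟨n,z,t,hW,h'⟩|⟨hnd₂,h'⟩ <;> rw [h'] at h₂ <;>
            [simp at h₂; skip]
          simp only [List.cons_append, List.cons.injEq, true_and] at h₁ h₂
          rw [h₁] at hnd₁
          obtain ⟨E, k, hE⟩ := ih A' ⟨m₁, m₂, T₁, T₂, U₁, U₂, hm, hT1, hT2, h₁, h₂⟩
          refine ⟨E, k, fun m T hT => ?_⟩
          rw [List.foldr_cons, hE m T hT]
          rcases A' with _ | ⟨a₁, A''⟩
          · simp
          cases a₁ <;> try simp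
          case b =>
            rcases A'' with _ | ⟨a₂, A'''⟩
            · simp
            cases a₂ <;> try simp
            case y jj =>
              rcases A''' with _ | ⟨z3, A4⟩
              · exact absurd rfl (hnd₁ jj _ _)
              · exact absurd rfl (hnd₁ jj _ _)
        case b =>
          rcases A' with _ | ⟨a₁, A''⟩
          · -- A = [b]: target b :: x m :: T cannot be an f-pattern image
            exfalso
            rcases pre_f_cases W₁ with ⟨n,z,t,hW,h⟩|⟨_,h⟩ <;> rw [h] at h₁ <;> simp at h₁
          cases a₁
          case y j =>
            rcases pre_f_cases W₁ with ⟨n,z,t,hW,h⟩|⟨_,h⟩ <;> rw [h] at h₁ <;>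
              [skip; simp at h₁]
            rcases pre_f_cases W₂ with ⟨n',z',t',hW',h'⟩|⟨_,h'⟩ <;> rw [h'] at h₂ <;>
              [skip; simp at h₂]
            rw [h₁] at hW; rw [h₂] at hW'
            obtain ⟨E, k, hE⟩ := ih (Gen.b :: Gen.y j :: A'')
              ⟨m₁, m₂, T₁, T₂, U₁, U₂, hm, hT1, hT2, by simpa using hW, by simpa using hW'⟩
            refine ⟨E, k, fun m T hT => ?_⟩
            rw [List.foldr_cons, hE m T hT]
            rcases A'' with _ | ⟨a₂, A'''⟩ <;> simp
          all_goals
            exfalso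
            rcases pre_f_cases W₁ with ⟨n,z,t,hW,h⟩|⟨_,h⟩ <;> rw [h] at h₁ <;> simp at h₁
        all_goals
          exfalso
          rcases pre_f_cases W₁ with ⟨n,z,t,hW,h⟩|⟨_,h⟩ <;> rw [h] at h₁ <;> simp at h₁

/-- Trigger for the bare-family division lemma (two bare `x`-points). -/
def W2trig (Q C : List Gen) : Prop :=
  ∃ (m₁ m₂ : ℤ) (U₁ U₂ : List Gen), m₁ ≠ m₂ ∧
    List.foldr pre U₁ Q = C ++ [Gen.x m₁] ∧
    List.foldr pre U₂ Q = C ++ [Gen.x m₂]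

/-- Conclusion of the bare-family division lemma (both families, common prefix). -/
def W2conc (Q C : List Gen) : Prop :=
  ∃ (E : List Gen) (kx ky : ℤ), ∀ m : ℤ,
    List.foldr pre (E ++ [Gen.x (m + kx)]) Q = C ++ [Gen.x m] ∧
    List.foldr pre (E ++ [Gen.y (m + ky)]) Q = C ++ [Gen.y m]

lemma W2 : ∀ (Q C : List Gen), W2trig Q C → W2conc Q C := by
  intro Q
  induction Q with
  | nil =>
    intro C _
    exact ⟨C, 0, 0, fun m => by simp⟩
  | cons g Q ih =>
    intro C htrig
    obtain ⟨m₁, m₂, U₁, U₂, hm, h₁, h₂⟩ := htrig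
    simp only [List.foldr_cons] at h₁ h₂
    set W₁ := List.foldr pre U₁ Q with hW₁def
    set W₂ := List.foldr pre U₂ Q with hW₂def
    rcases C with _ | ⟨C₀, C'⟩
    · exfalso
      cases g
      case b => simp at h₁
      case x j =>
        simp only [pre_x, List.nil_append, List.cons.injEq, Gen.x.injEq] at h₁ h₂
        exact hm (h₁.1 ▸ h₂.1 ▸ rfl)
      case y j => simp at h₁
      case a =>
        rcases pre_a_cases W₁ with ⟨n,t,hW,h⟩|⟨n,t,hW,h⟩|⟨_,_,h⟩ <;> rw [h] at h₁ <;> simp at h₁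
      case c =>
        rcases pre_c_cases W₁ with ⟨n,t,hW,h⟩|⟨n,t,hW,h⟩|⟨_,_,h⟩ <;> rw [h] at h₁ <;> simp at h₁
      case d =>
        rcases pre_d_cases W₁ with ⟨n,z,t,hW,h⟩|⟨_,h⟩ <;> rw [h] at h₁ <;> simp at h₁
      case f =>
        rcases pre_f_cases W₁ with ⟨n,z,t,hW,h⟩|⟨_,h⟩ <;> rw [h] at h₁ <;> simp at h₁
    · cases g
      case b =>
        simp only [pre_b, List.cons_append, List.cons.injEq] at h₁ h₂
        obtain ⟨hC₀, hWe₁⟩ := h₁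
        obtain ⟨-, hWe₂⟩ := h₂
        subst hC₀
        obtain ⟨E, kx, ky, hE⟩ := ih C' ⟨m₁, m₂, U₁, U₂, hm, hWe₁, hWe₂⟩
        exact ⟨E, kx, ky, fun m => by
          constructor <;> simp only [List.foldr_cons, (hE m).1, (hE m).2, pre_b,
            List.cons_append]⟩
      case x j =>
        simp only [pre_x, List.cons_append, List.cons.injEq] at h₁ h₂
        obtain ⟨hC₀, hWe₁⟩ := h₁
        obtain ⟨-, hWe₂⟩ := h₂
        subst hC₀
        obtain ⟨E, kx, ky, hE⟩ := ih C' ⟨m₁, m₂, U₁, U₂, hm, hWe₁, hWe₂⟩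
        exact ⟨E, kx, ky, fun m => by
          constructor <;> simp only [List.foldr_cons, (hE m).1, (hE m).2, pre_x,
            List.cons_append]⟩
      case y j =>
        simp only [pre_y, List.cons_append, List.cons.injEq] at h₁ h₂
        obtain ⟨hC₀, hWe₁⟩ := h₁
        obtain ⟨-, hWe₂⟩ := h₂
        subst hC₀
        obtain ⟨E, kx, ky, hE⟩ := ih C' ⟨m₁, m₂, U₁, U₂, hm, hWe₁, hWe₂⟩
        exact ⟨E, kx, ky, fun m => by
          constructor <;> simp only [List.foldr_cons, (hE m).1, (hE m).2, pre_y,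
            List.cons_append]⟩
      case a =>
        cases C₀
        case a =>
          rcases pre_a_cases W₁ with ⟨n,t,hW,h⟩|⟨n,t,hW,h⟩|⟨hnx₁,hny₁,h⟩ <;> rw [h] at h₁ <;>
            [simp at h₁; simp at h₁; skip]
          rcases pre_a_cases W₂ with ⟨n,t,hW,h'⟩|⟨n,t,hW,h'⟩|⟨hnx₂,hny₂,h'⟩ <;> rw [h'] at h₂ <;>
            [simp at h₂; simp at h₂; skip]
          simp only [List.cons_append, List.cons.injEq, true_and] at h₁ h₂
          rw [h₁] at hnx₁ hny₁
          obtain ⟨E, kx, ky, hE⟩ := ih C' ⟨m₁, m₂, U₁, U₂, hm, h₁, h₂⟩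
          refine ⟨E, kx, ky, fun m => ?_⟩
          refine ⟨?_, ?_⟩ <;> rw [List.foldr_cons]
          · rw [(hE m).1]
            rcases C' with _ | ⟨c₁, C''⟩
            · simp
            cases c₁ <;> try simp
            case b =>
              rcases C'' with _ | ⟨c₂, C'''⟩
              · exact absurd rfl (hnx₁ m₁ [])
              cases c₂ <;> try simp
              · exact absurd rfl (hnx₁ _ _)
              · exact absurd rfl (hny₁ _ _)
          · rw [(hE m).2]
            rcases C' with _ | ⟨c₁, C''⟩
            · simp
            cases c₁ <;> try simp
            case b =>
              rcases C'' with _ | ⟨c₂, C'''⟩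
              · exact absurd rfl (hnx₁ m₁ [])
              cases c₂ <;> try simp
              · exact absurd rfl (hnx₁ _ _)
              · exact absurd rfl (hny₁ _ _)
        case b =>
          rcases C' with _ | ⟨c₁, C''⟩
          · -- C = [b]
            rcases pre_a_cases W₁ with ⟨n,t,hW,h⟩|⟨n,t,hW,h⟩|⟨_,_,h⟩ <;> rw [h] at h₁ <;>
              [skip; simp at h₁; simp at h₁]
            rcases pre_a_cases W₂ with ⟨n',t',hW',h'⟩|⟨n',t',hW',h'⟩|⟨_,_,h'⟩ <;> rw [h'] at h₂ <;>
              [skip; simp at h₂; simp at h₂]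
            rw [h₁] at hW; rw [h₂] at hW'
            obtain ⟨E, kx, ky, hE⟩ := ih [Gen.b] ⟨m₁, m₂, U₁, U₂, hm, by simpa using hW,
              by simpa using hW'⟩
            refine ⟨E, kx, ky - 1, fun m => ?_⟩
            constructor
            · rw [List.foldr_cons, (hE m).1]; simp
            · have harith : m + (ky - 1) = (m - 1) + ky := by ring
              rw [List.foldr_cons, harith, (hE (m-1)).2]
              have hj : m - 1 + 1 = m := by omega
              simp [hj]
          cases c₁
          case x j =>
            rcases pre_a_cases W₁ with ⟨n,t,hW,h⟩|⟨n,t,hW,h⟩|⟨_,_,h⟩ <;> rw [h] at h₁ <;>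
              [skip; simp at h₁; simp at h₁]
            rcases pre_a_cases W₂ with ⟨n',t',hW',h'⟩|⟨n',t',hW',h'⟩|⟨_,_,h'⟩ <;> rw [h'] at h₂ <;>
              [skip; simp at h₂; simp at h₂]
            rw [h₁] at hW; rw [h₂] at hW'
            obtain ⟨E, kx, ky, hE⟩ := ih (Gen.b :: Gen.x j :: C'')
              ⟨m₁, m₂, U₁, U₂, hm, by simpa using hW, by simpa using hW'⟩
            refine ⟨E, kx, ky, fun m => ?_⟩
            constructor
            · rw [List.foldr_cons, (hE m).1]; simp
            · rw [List.foldr_cons, (hE m).2]; simp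
          case y j =>
            rcases pre_a_cases W₁ with ⟨n,t,hW,h⟩|⟨n,t,hW,h⟩|⟨_,_,h⟩ <;> rw [h] at h₁ <;>
              [simp at h₁; skip; simp at h₁]
            rcases pre_a_cases W₂ with ⟨n',t',hW',h'⟩|⟨n',t',hW',h'⟩|⟨_,_,h'⟩ <;> rw [h'] at h₂ <;>
              [simp at h₂; skip; simp at h₂]
            simp only [List.cons_append, List.cons.injEq, Gen.y.injEq, true_and] at h₁ h₂
            obtain ⟨hn, ht⟩ := h₁
            obtain ⟨hn', ht'⟩ := h₂
            have hn2 : n = j - 1 := by omega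
            have hn2' : n' = j - 1 := by omega
            rw [hn2, ht] at hW; rw [hn2', ht'] at hW'
            obtain ⟨E, kx, ky, hE⟩ := ih (Gen.b :: Gen.y (j-1) :: C'')
              ⟨m₁, m₂, U₁, U₂, hm, by simpa using hW, by simpa using hW'⟩
            refine ⟨E, kx, ky, fun m => ?_⟩
            have hj : j - 1 + 1 = j := by omega
            constructor
            · rw [List.foldr_cons, (hE m).1]; simp [hj]
            · rw [List.foldr_cons, (hE m).2]; simp [hj]
          all_goals
            exfalso
            rcases pre_a_cases W₁ with ⟨n,t,hW,h⟩|⟨n,t,hW,h⟩|⟨_,_,h⟩ <;> rw [h] at h₁ <;>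
              simp at h₁
        all_goals
          exfalso
          rcases pre_a_cases W₁ with ⟨n,t,hW,h⟩|⟨n,t,hW,h⟩|⟨_,_,h⟩ <;> rw [h] at h₁ <;> simp at h₁
      case c =>
        cases C₀
        case c =>
          rcases pre_c_cases W₁ with ⟨n,t,hW,h⟩|⟨n,t,hW,h⟩|⟨hnx₁,hny₁,h⟩ <;> rw [h] at h₁ <;>
            [simp at h₁; simp at h₁; skip]
          rcases pre_c_cases W₂ with ⟨n,t,hW,h'⟩|⟨n,t,hW,h'⟩|⟨hnx₂,hny₂,h'⟩ <;> rw [h'] at h₂ <;>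
            [simp at h₂; simp at h₂; skip]
          simp only [List.cons_append, List.cons.injEq, true_and] at h₁ h₂
          rw [h₁] at hnx₁ hny₁
          obtain ⟨E, kx, ky, hE⟩ := ih C' ⟨m₁, m₂, U₁, U₂, hm, h₁, h₂⟩
          refine ⟨E, kx, ky, fun m => ?_⟩
          refine ⟨?_, ?_⟩ <;> rw [List.foldr_cons]
          · rw [(hE m).1]
            rcases C' with _ | ⟨c₁, C''⟩
            · simp
            cases c₁ <;> try simp
            case b =>
              rcases C'' with _ | ⟨c₂, C'''⟩
              · exact absurd rfl (hnx₁ m₁ [])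
              cases c₂ <;> try simp
              · exact absurd rfl (hnx₁ _ _)
              · exact absurd rfl (hny₁ _ _)
          · rw [(hE m).2]
            rcases C' with _ | ⟨c₁, C''⟩
            · simp
            cases c₁ <;> try simp
            case b =>
              rcases C'' with _ | ⟨c₂, C'''⟩
              · exact absurd rfl (hnx₁ m₁ [])
              cases c₂ <;> try simp
              · exact absurd rfl (hnx₁ _ _)
              · exact absurd rfl (hny₁ _ _)
        case b =>
          rcases C' with _ | ⟨c₁, C''⟩
          · -- C = [b]
            rcases pre_c_cases W₁ with ⟨n,t,hW,h⟩|⟨n,t,hW,h⟩|⟨_,_,h⟩ <;> rw [h] at h₁ <;>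
              [skip; simp at h₁; simp at h₁]
            rcases pre_c_cases W₂ with ⟨n',t',hW',h'⟩|⟨n',t',hW',h'⟩|⟨_,_,h'⟩ <;> rw [h'] at h₂ <;>
              [skip; simp at h₂; simp at h₂]
            simp only [List.singleton_append, List.cons.injEq, Gen.x.injEq, true_and] at h₁ h₂
            obtain ⟨hn, ht⟩ := h₁
            obtain ⟨hn', ht'⟩ := h₂
            have hn2 : n = m₁ - 1 := by omega
            have hn2' : n' = m₂ - 1 := by omega
            rw [hn2, ht] at hW; rw [hn2', ht'] at hW'
            obtain ⟨E, kx, ky, hE⟩ := ih [Gen.b]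
              ⟨m₁ - 1, m₂ - 1, U₁, U₂, by omega, by simpa using hW, by simpa using hW'⟩
            refine ⟨E, kx - 1, ky, fun m => ?_⟩
            constructor
            · have harith : m + (kx - 1) = (m - 1) + kx := by ring
              rw [List.foldr_cons, harith, (hE (m-1)).1]
              have hj : m - 1 + 1 = m := by omega
              simp [hj]
            · rw [List.foldr_cons, (hE m).2]; simp
          cases c₁
          case x j =>
            rcases pre_c_cases W₁ with ⟨n,t,hW,h⟩|⟨n,t,hW,h⟩|⟨_,_,h⟩ <;> rw [h] at h₁ <;>
              [skip; simp at h₁; simp at h₁]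
            rcases pre_c_cases W₂ with ⟨n',t',hW',h'⟩|⟨n',t',hW',h'⟩|⟨_,_,h'⟩ <;> rw [h'] at h₂ <;>
              [skip; simp at h₂; simp at h₂]
            simp only [List.cons_append, List.cons.injEq, Gen.x.injEq, true_and] at h₁ h₂
            obtain ⟨hn, ht⟩ := h₁
            obtain ⟨hn', ht'⟩ := h₂
            have hn2 : n = j - 1 := by omega
            have hn2' : n' = j - 1 := by omega
            rw [hn2, ht] at hW; rw [hn2', ht'] at hW'
            obtain ⟨E, kx, ky, hE⟩ := ih (Gen.b :: Gen.x (j-1) :: C'')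
              ⟨m₁, m₂, U₁, U₂, hm, by simpa using hW, by simpa using hW'⟩
            refine ⟨E, kx, ky, fun m => ?_⟩
            have hj : j - 1 + 1 = j := by omega
            constructor
            · rw [List.foldr_cons, (hE m).1]; simp [hj]
            · rw [List.foldr_cons, (hE m).2]; simp [hj]
          case y j =>
            rcases pre_c_cases W₁ with ⟨n,t,hW,h⟩|⟨n,t,hW,h⟩|⟨_,_,h⟩ <;> rw [h] at h₁ <;>
              [simp at h₁; skip; simp at h₁]
            rcases pre_c_cases W₂ with ⟨n',t',hW',h'⟩|⟨n',t',hW',h'⟩|⟨_,_,h'⟩ <;> rw [h'] at h₂ <;>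
              [simp at h₂; skip; simp at h₂]
            rw [h₁] at hW; rw [h₂] at hW'
            obtain ⟨E, kx, ky, hE⟩ := ih (Gen.b :: Gen.y j :: C'')
              ⟨m₁, m₂, U₁, U₂, hm, by simpa using hW, by simpa using hW'⟩
            refine ⟨E, kx, ky, fun m => ?_⟩
            constructor
            · rw [List.foldr_cons, (hE m).1]; simp
            · rw [List.foldr_cons, (hE m).2]; simp
          all_goals
            exfalso
            rcases pre_c_cases W₁ with ⟨n,t,hW,h⟩|⟨n,t,hW,h⟩|⟨_,_,h⟩ <;> rw [h] at h₁ <;>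
              simp at h₁
        all_goals
          exfalso
          rcases pre_c_cases W₁ with ⟨n,t,hW,h⟩|⟨n,t,hW,h⟩|⟨_,_,h⟩ <;> rw [h] at h₁ <;> simp at h₁
      case d =>
        cases C₀
        case d =>
          rcases pre_d_cases W₁ with ⟨n,z,t,hW,h⟩|⟨hnd₁,h⟩ <;> rw [h] at h₁ <;>
            [simp at h₁; skip]
          rcases pre_d_cases W₂ with ⟨n,z,t,hW,h'⟩|⟨hnd₂,h'⟩ <;> rw [h'] at h₂ <;>
            [simp at h₂; skip]
          simp only [List.cons_append, List.cons.injEq, true_and] at h₁ h₂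
          rw [h₁] at hnd₁
          obtain ⟨E, kx, ky, hE⟩ := ih C' ⟨m₁, m₂, U₁, U₂, hm, h₁, h₂⟩
          refine ⟨E, kx, ky, fun m => ?_⟩
          refine ⟨?_, ?_⟩ <;> rw [List.foldr_cons]
          · rw [(hE m).1]
            rcases C' with _ | ⟨c₁, C''⟩
            · simp
            cases c₁ <;> try simp
            case b =>
              rcases C'' with _ | ⟨c₂, C'''⟩
              · simp
              cases c₂ <;> try simp
              case x jj =>
                rcases C''' with _ | ⟨z3, C4⟩
                · exact absurd rfl (hnd₁ jj _ _)
                · exact absurd rfl (hnd₁ jj _ _)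
          · rw [(hE m).2]
            rcases C' with _ | ⟨c₁, C''⟩
            · simp
            cases c₁ <;> try simp
            case b =>
              rcases C'' with _ | ⟨c₂, C'''⟩
              · simp
              cases c₂ <;> try simp
              case x jj =>
                rcases C''' with _ | ⟨z3, C4⟩
                · exact absurd rfl (hnd₁ jj _ _)
                · exact absurd rfl (hnd₁ jj _ _)
        case b =>
          rcases C' with _ | ⟨c₁, C''⟩
          · exfalso
            rcases pre_d_cases W₁ with ⟨n,z,t,hW,h⟩|⟨_,h⟩ <;> rw [h] at h₁ <;> simp at h₁
          cases c₁
          case x j =>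
            rcases pre_d_cases W₁ with ⟨n,z,t,hW,h⟩|⟨_,h⟩ <;> rw [h] at h₁ <;>
              [skip; simp at h₁]
            rcases pre_d_cases W₂ with ⟨n',z',t',hW',h'⟩|⟨_,h'⟩ <;> rw [h'] at h₂ <;>
              [skip; simp at h₂]
            rw [h₁] at hW; rw [h₂] at hW'
            obtain ⟨E, kx, ky, hE⟩ := ih (Gen.b :: Gen.x j :: C'')
              ⟨m₁, m₂, U₁, U₂, hm, by simpa using hW, by simpa using hW'⟩
            refine ⟨E, kx, ky, fun m => ?_⟩
            constructor
            · rw [List.foldr_cons, (hE m).1]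
              rcases C'' with _ | ⟨z3, C4⟩ <;> simp
            · rw [List.foldr_cons, (hE m).2]
              rcases C'' with _ | ⟨z3, C4⟩ <;> simp
          all_goals
            exfalso
            rcases pre_d_cases W₁ with ⟨n,z,t,hW,h⟩|⟨_,h⟩ <;> rw [h] at h₁ <;> simp at h₁
        all_goals
          exfalso
          rcases pre_d_cases W₁ with ⟨n,z,t,hW,h⟩|⟨_,h⟩ <;> rw [h] at h₁ <;> simp at h₁
      case f =>
        cases C₀
        case f =>
          rcases pre_f_cases W₁ with ⟨n,z,t,hW,h⟩|⟨hnf₁,h⟩ <;> rw [h] at h₁ <;>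
            [simp at h₁; skip]
          rcases pre_f_cases W₂ with ⟨n,z,t,hW,h'⟩|⟨hnf₂,h'⟩ <;> rw [h'] at h₂ <;>
            [simp at h₂; skip]
          simp only [List.cons_append, List.cons.injEq, true_and] at h₁ h₂
          rw [h₁] at hnf₁
          obtain ⟨E, kx, ky, hE⟩ := ih C' ⟨m₁, m₂, U₁, U₂, hm, h₁, h₂⟩
          refine ⟨E, kx, ky, fun m => ?_⟩
          refine ⟨?_, ?_⟩ <;> rw [List.foldr_cons]
          · rw [(hE m).1]
            rcases C' with _ | ⟨c₁, C''⟩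
            · simp
            cases c₁ <;> try simp
            case b =>
              rcases C'' with _ | ⟨c₂, C'''⟩
              · simp
              cases c₂ <;> try simp
              case y jj =>
                rcases C''' with _ | ⟨z3, C4⟩
                · exact absurd rfl (hnf₁ jj _ _)
                · exact absurd rfl (hnf₁ jj _ _)
          · rw [(hE m).2]
            rcases C' with _ | ⟨c₁, C''⟩
            · simp
            cases c₁ <;> try simp
            case b =>
              rcases C'' with _ | ⟨c₂, C'''⟩
              · simp
              cases c₂ <;> try simp
              case y jj =>
                rcases C''' with _ | ⟨z3, C4⟩
                · exact absurd rfl (hnf₁ jj _ _)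
                · exact absurd rfl (hnf₁ jj _ _)
        case b =>
          rcases C' with _ | ⟨c₁, C''⟩
          · exfalso
            rcases pre_f_cases W₁ with ⟨n,z,t,hW,h⟩|⟨_,h⟩ <;> rw [h] at h₁ <;> simp at h₁
          cases c₁
          case y j =>
            rcases pre_f_cases W₁ with ⟨n,z,t,hW,h⟩|⟨_,h⟩ <;> rw [h] at h₁ <;>
              [skip; simp at h₁]
            rcases pre_f_cases W₂ with ⟨n',z',t',hW',h'⟩|⟨_,h'⟩ <;> rw [h'] at h₂ <;>
              [skip; simp at h₂]
            rw [h₁] at hW; rw [h₂] at hW'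
            obtain ⟨E, kx, ky, hE⟩ := ih (Gen.b :: Gen.y j :: C'')
              ⟨m₁, m₂, U₁, U₂, hm, by simpa using hW, by simpa using hW'⟩
            refine ⟨E, kx, ky, fun m => ?_⟩
            constructor
            · rw [List.foldr_cons, (hE m).1]
              rcases C'' with _ | ⟨z3, C4⟩ <;> simp
            · rw [List.foldr_cons, (hE m).2]
              rcases C'' with _ | ⟨z3, C4⟩ <;> simp
          all_goals
            exfalso
            rcases pre_f_cases W₁ with ⟨n,z,t,hW,h⟩|⟨_,h⟩ <;> rw [h] at h₁ <;> simp at h₁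
        all_goals
          exfalso
          rcases pre_f_cases W₁ with ⟨n,z,t,hW,h⟩|⟨_,h⟩ <;> rw [h] at h₁ <;> simp at h₁

lemma foldr_pre_sw (Q U : List Gen) :
    List.foldr pre (U.map sw) (Q.map sw) = (List.foldr pre U Q).map sw := by
  induction Q with
  | nil => rfl
  | cons g Q ih => simp only [List.map_cons, List.foldr_cons, ih, pre_sw]

lemma map_sw_ne_nil {T : List Gen} (h : T ≠ []) : T.map sw ≠ [] := by
  simpa using h

/-- `y`-version of the tail-family division lemma, by the swap symmetry. -/
lemma W1y (Q A : List Gen)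
    (htrig : ∃ (m₁ m₂ : ℤ) (T₁ T₂ U₁ U₂ : List Gen), m₁ ≠ m₂ ∧ T₁ ≠ [] ∧ T₂ ≠ [] ∧
      List.foldr pre U₁ Q = A ++ Gen.y m₁ :: T₁ ∧
      List.foldr pre U₂ Q = A ++ Gen.y m₂ :: T₂) :
    ∃ (E : List Gen) (k : ℤ), ∀ (m : ℤ) (T : List Gen), T ≠ [] →
      List.foldr pre (E ++ Gen.y (m + k) :: T) Q = A ++ Gen.y m :: T := by
  obtain ⟨m₁, m₂, T₁, T₂, U₁, U₂, hm, hT1, hT2, h₁, h₂⟩ := htrig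
  have key : W1trig (Q.map sw) (A.map sw) := by
    refine ⟨m₁, m₂, T₁.map sw, T₂.map sw, U₁.map sw, U₂.map sw, hm,
      map_sw_ne_nil hT1, map_sw_ne_nil hT2, ?_, ?_⟩
    · rw [foldr_pre_sw, h₁]; simp [sw]
    · rw [foldr_pre_sw, h₂]; simp [sw]
  obtain ⟨E, k, hE⟩ := W1 _ _ key
  refine ⟨E.map sw, k, fun m T hT => ?_⟩
  apply map_sw_injective
  rw [← foldr_pre_sw]
  have : (E.map sw ++ Gen.y (m + k) :: T).map sw = E ++ Gen.x (m + k) :: T.map sw := by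
    simp [sw]
  rw [this, hE m (T.map sw) (map_sw_ne_nil hT)]
  simp [sw]

/-- `y`-version of the bare-family division lemma, by the swap symmetry. -/
lemma W2y (Q C : List Gen)
    (htrig : ∃ (m₁ m₂ : ℤ) (U₁ U₂ : List Gen), m₁ ≠ m₂ ∧
      List.foldr pre U₁ Q = C ++ [Gen.y m₁] ∧
      List.foldr pre U₂ Q = C ++ [Gen.y m₂]) :
    W2conc Q C := by
  obtain ⟨m₁, m₂, U₁, U₂, hm, h₁, h₂⟩ := htrig
  have key : W2trig (Q.map sw) (C.map sw) := by
    refine ⟨m₁, m₂, U₁.map sw, U₂.map sw, hm, ?_, ?_⟩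
    · rw [foldr_pre_sw, h₁]; simp [sw]
    · rw [foldr_pre_sw, h₂]; simp [sw]
  obtain ⟨E, kx, ky, hE⟩ := W2 _ _ key
  refine ⟨E.map sw, ky, kx, fun m => ?_⟩
  constructor
  · apply map_sw_injective
    rw [← foldr_pre_sw]
    have : (E.map sw ++ [Gen.x (m + ky)]).map sw = E ++ [Gen.y (m + ky)] := by simp [sw]
    rw [this, (hE m).2]
    simp [sw]
  · apply map_sw_injective
    rw [← foldr_pre_sw]
    have : (E.map sw ++ [Gen.y (m + kx)]).map sw = E ++ [Gen.x (m + kx)] := by simp [sw]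
    rw [this, (hE m).1]
    simp [sw]

/-! ### Element-level division lemmas -/

lemma exists_solution_iff (q z : R) : (∃ u, q * u = z) ↔ ∃ U, act q U = nf z := by
  constructor
  · rintro ⟨u, rfl⟩; exact ⟨nf u, (nf_mul q u).symm⟩
  · rintro ⟨U, hU⟩
    refine ⟨qL U, ?_⟩
    have := qL_act q U
    rw [hU, qL_nf] at this
    exact this.symm

lemma nf_xfam (w t : R) (n : ℤ) : nf (w * gen (Gen.x n) * t) = act w (Gen.x n :: nf t) := by
  rw [mul_assoc, nf_mul, nf_mul]; rfl

lemma nf_yfam (w t : R) (n : ℤ) : nf (w * gen (Gen.y n) * t) = act w (Gen.y n :: nf t) := by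
  rw [mul_assoc, nf_mul, nf_mul]; rfl

lemma qL_xword (E : List Gen) (j : ℤ) (t : R) :
    qL (E ++ Gen.x j :: nf t) = qL E * gen (Gen.x j) * t := by
  rw [qL_append, qL_cons, qL_nf, mul_assoc]

lemma qL_yword (E : List Gen) (j : ℤ) (t : R) :
    qL (E ++ Gen.y j :: nf t) = qL E * gen (Gen.y j) * t := by
  rw [qL_append, qL_cons, qL_nf, mul_assoc]

lemma eqinv1x (q w : R) (n₁ n₂ : ℤ) (t₁ t₂ u₁ u₂ : R) (hm : n₁ ≠ n₂)
    (ht1 : t₁ ≠ 1) (ht2 : t₂ ≠ 1)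
    (e₁ : q * u₁ = w * gen (Gen.x n₁) * t₁) (e₂ : q * u₂ = w * gen (Gen.x n₂) * t₂) :
    ∃ e k, ∀ n (t : R), t ≠ 1 → q * (e * gen (Gen.x (n + k)) * t) = w * gen (Gen.x n) * t := by
  obtain ⟨Q₀, rfl⟩ := qL_surjective q
  obtain ⟨Ax, Ay, C, jx, jy, kx, ky, hstr⟩ := struct w
  have hnf : ∀ n (t : R), t ≠ 1 → nf (w * gen (Gen.x n) * t) = Ax ++ Gen.x (n + jx) :: nf t := by
    intro n t ht
    rw [nf_xfam]
    exact (hstr n (nf t)).1 (fun hh => ht (nf_eq_nil_iff.mp hh))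
  have key : W1trig Q₀ Ax := by
    refine ⟨n₁ + jx, n₂ + jx, nf t₁, nf t₂, nf u₁, nf u₂, by omega,
      fun hh => ht1 (nf_eq_nil_iff.mp hh), fun hh => ht2 (nf_eq_nil_iff.mp hh), ?_, ?_⟩
    · rw [← act_qL, ← nf_mul, e₁, hnf n₁ t₁ ht1]
    · rw [← act_qL, ← nf_mul, e₂, hnf n₂ t₂ ht2]
  obtain ⟨E, k, hE⟩ := W1 _ _ key
  refine ⟨qL E, jx + k, fun n t ht => ?_⟩
  have hT : nf t ≠ [] := fun hh => ht (nf_eq_nil_iff.mp hh)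
  have step : act (qL Q₀) (E ++ Gen.x (n + jx + k) :: nf t) = Ax ++ Gen.x (n + jx) :: nf t := by
    rw [act_qL]; exact hE (n + jx) (nf t) hT
  have : qL Q₀ * qL (E ++ Gen.x (n + jx + k) :: nf t) = qL (Ax ++ Gen.x (n + jx) :: nf t) := by
    rw [← qL_act, step]
  rw [qL_xword] at this
  rw [show n + (jx + k) = n + jx + k by ring, this, ← hnf n t ht, qL_nf]

lemma eqinv1y (q w : R) (n₁ n₂ : ℤ) (t₁ t₂ u₁ u₂ : R) (hm : n₁ ≠ n₂)
    (ht1 : t₁ ≠ 1) (ht2 : t₂ ≠ 1)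
    (e₁ : q * u₁ = w * gen (Gen.y n₁) * t₁) (e₂ : q * u₂ = w * gen (Gen.y n₂) * t₂) :
    ∃ e k, ∀ n (t : R), t ≠ 1 → q * (e * gen (Gen.y (n + k)) * t) = w * gen (Gen.y n) * t := by
  obtain ⟨Q₀, rfl⟩ := qL_surjective q
  obtain ⟨Ax, Ay, C, jx, jy, kx, ky, hstr⟩ := struct w
  have hnf : ∀ n (t : R), t ≠ 1 → nf (w * gen (Gen.y n) * t) = Ay ++ Gen.y (n + jy) :: nf t := by
    intro n t ht
    rw [nf_yfam]
    exact (hstr n (nf t)).2.1 (fun hh => ht (nf_eq_nil_iff.mp hh))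
  obtain ⟨E, k, hE⟩ := W1y Q₀ Ay
    ⟨n₁ + jy, n₂ + jy, nf t₁, nf t₂, nf u₁, nf u₂, by omega,
      fun hh => ht1 (nf_eq_nil_iff.mp hh), fun hh => ht2 (nf_eq_nil_iff.mp hh),
      by rw [← act_qL, ← nf_mul, e₁, hnf n₁ t₁ ht1],
      by rw [← act_qL, ← nf_mul, e₂, hnf n₂ t₂ ht2]⟩
  refine ⟨qL E, jy + k, fun n t ht => ?_⟩
  have hT : nf t ≠ [] := fun hh => ht (nf_eq_nil_iff.mp hh)
  have : qL Q₀ * qL (E ++ Gen.y (n + jy + k) :: nf t) = qL (Ay ++ Gen.y (n + jy) :: nf t) := by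
    rw [← qL_act, act_qL, hE (n + jy) (nf t) hT]
  rw [qL_yword] at this
  rw [show n + (jy + k) = n + jy + k by ring, this, ← hnf n t ht, qL_nf]

lemma eqinv2x (q w : R) (n₁ n₂ : ℤ) (u₁ u₂ : R) (hm : n₁ ≠ n₂)
    (e₁ : q * u₁ = w * gen (Gen.x n₁)) (e₂ : q * u₂ = w * gen (Gen.x n₂)) :
    ∃ e kx ky, ∀ n : ℤ,
      q * (e * gen (Gen.x (n + kx))) = w * gen (Gen.x n) ∧
      q * (e * gen (Gen.y (n + ky))) = w * gen (Gen.y n) := by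
  obtain ⟨Q₀, rfl⟩ := qL_surjective q
  obtain ⟨Ax, Ay, C, jx, jy, kx, ky, hstr⟩ := struct w
  have hnfx : ∀ n : ℤ, nf (w * gen (Gen.x n)) = C ++ [Gen.x (n + kx)] := by
    intro n
    have := nf_xfam w 1 n
    rw [mul_one] at this
    rw [this]
    exact (hstr n []).2.2.1
  have hnfy : ∀ n : ℤ, nf (w * gen (Gen.y n)) = C ++ [Gen.y (n + ky)] := by
    intro n
    have := nf_yfam w 1 n
    rw [mul_one] at this
    rw [this]
    exact (hstr n []).2.2.2
  obtain ⟨E, ex, ey, hE⟩ := W2 Q₀ C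
    ⟨n₁ + kx, n₂ + kx, nf u₁, nf u₂, by omega,
      by rw [← act_qL, ← nf_mul, e₁, hnfx n₁],
      by rw [← act_qL, ← nf_mul, e₂, hnfx n₂]⟩
  refine ⟨qL E, kx + ex, ky + ey, fun n => ?_⟩
  constructor
  · have : qL Q₀ * qL (E ++ [Gen.x (n + kx + ex)]) = qL (C ++ [Gen.x (n + kx)]) := by
      rw [← qL_act, act_qL, (hE (n + kx)).1]
    have h2 : qL (E ++ [Gen.x (n + kx + ex)]) = qL E * gen (Gen.x (n + kx + ex)) := by
      rw [qL_append, qL_cons, qL_nil, mul_one]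
    rw [h2] at this
    rw [show n + (kx + ex) = n + kx + ex by ring, this, ← hnfx n, qL_nf]
  · have : qL Q₀ * qL (E ++ [Gen.y (n + ky + ey)]) = qL (C ++ [Gen.y (n + ky)]) := by
      rw [← qL_act, act_qL, (hE (n + ky)).2]
    have h2 : qL (E ++ [Gen.y (n + ky + ey)]) = qL E * gen (Gen.y (n + ky + ey)) := by
      rw [qL_append, qL_cons, qL_nil, mul_one]
    rw [h2] at this
    rw [show n + (ky + ey) = n + ky + ey by ring, this, ← hnfy n, qL_nf]

lemma eqinv2y (q w : R) (n₁ n₂ : ℤ) (u₁ u₂ : R) (hm : n₁ ≠ n₂)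
    (e₁ : q * u₁ = w * gen (Gen.y n₁)) (e₂ : q * u₂ = w * gen (Gen.y n₂)) :
    ∃ e kx ky, ∀ n : ℤ,
      q * (e * gen (Gen.x (n + kx))) = w * gen (Gen.x n) ∧
      q * (e * gen (Gen.y (n + ky))) = w * gen (Gen.y n) := by
  obtain ⟨Q₀, rfl⟩ := qL_surjective q
  obtain ⟨Ax, Ay, C, jx, jy, kx, ky, hstr⟩ := struct w
  have hnfx : ∀ n : ℤ, nf (w * gen (Gen.x n)) = C ++ [Gen.x (n + kx)] := by
    intro n
    have := nf_xfam w 1 n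
    rw [mul_one] at this
    rw [this]
    exact (hstr n []).2.2.1
  have hnfy : ∀ n : ℤ, nf (w * gen (Gen.y n)) = C ++ [Gen.y (n + ky)] := by
    intro n
    have := nf_yfam w 1 n
    rw [mul_one] at this
    rw [this]
    exact (hstr n []).2.2.2
  obtain ⟨E, ex, ey, hE⟩ := W2y Q₀ C
    ⟨n₁ + ky, n₂ + ky, nf u₁, nf u₂, by omega,
      by rw [← act_qL, ← nf_mul, e₁, hnfy n₁],
      by rw [← act_qL, ← nf_mul, e₂, hnfy n₂]⟩
  refine ⟨qL E, kx + ex, ky + ey, fun n => ?_⟩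
  constructor
  · have : qL Q₀ * qL (E ++ [Gen.x (n + kx + ex)]) = qL (C ++ [Gen.x (n + kx)]) := by
      rw [← qL_act, act_qL, (hE (n + kx)).1]
    have h2 : qL (E ++ [Gen.x (n + kx + ex)]) = qL E * gen (Gen.x (n + kx + ex)) := by
      rw [qL_append, qL_cons, qL_nil, mul_one]
    rw [h2] at this
    rw [show n + (kx + ex) = n + kx + ex by ring, this, ← hnfx n, qL_nf]
  · have : qL Q₀ * qL (E ++ [Gen.y (n + ky + ey)]) = qL (C ++ [Gen.y (n + ky)]) := by
      rw [← qL_act, act_qL, (hE (n + ky)).2]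
    have h2 : qL (E ++ [Gen.y (n + ky + ey)]) = qL E * gen (Gen.y (n + ky + ey)) := by
      rw [qL_append, qL_cons, qL_nil, mul_one]
    rw [h2] at this
    rw [show n + (ky + ey) = n + ky + ey by ring, this, ← hnfy n, qL_nf]

/-! ### The invariant for elements of the left inverse hull -/

lemma gen_x_ne_one (n : ℤ) : gen (Gen.x n) ≠ 1 := by
  intro h
  have : nf (gen (Gen.x n)) = [] := by rw [h]; rfl
  simp only [nf] at this
  exact absurd this (by exact pre_ne_nil (Gen.x n) [])

lemma pinv_transl_eq_some {q t u : R} : pinv (ptransl q) t = some u ↔ q * u = t := by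
  constructor
  · intro h
    unfold pinv at h
    split at h
    case isTrue hex =>
      have hc := hex.choose_spec
      simp only [ptransl, Option.some.injEq] at hc h
      rw [← h, hc]
    case isFalse => exact absurd h (by simp)
  · intro h
    have hex : ∃ s, ptransl q s = some t := ⟨u, by rw [ptransl, h]⟩
    unfold pinv
    rw [dif_pos hex]
    have hc : q * hex.choose = t := Option.some.inj hex.choose_spec
    exact congrArg some (R_left_cancel (a := q) (hc.trans h.symm))

lemma pblock_eq_some {p : R × R} {z u : R} : pblock p z = some u ↔ p.2 * u = p.1 * z := by
  show pcomp (pinv (ptransl p.2)) (ptransl p.1) z = some u ↔ _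
  rw [pcomp, ptransl]
  show pinv (ptransl p.2) (p.1 * z) = some u ↔ _
  exact pinv_transl_eq_some

/-- The key invariant, preserved by composing with blocks. -/
def GoodMap (h : R → Option R) : Prop :=
  (∀ z v s, h z = some v → h (z * s) = some (v * s)) ∧
  ∀ r : R,
  ((∃ n₁ n₂ t₁ t₂, n₁ ≠ n₂ ∧ h (r * gen (Gen.x n₁) * t₁) ≠ none ∧
      h (r * gen (Gen.x n₂) * t₂) ≠ none) →
    ∃ e k, ∀ n (t : R), t ≠ 1 →
      h (r * gen (Gen.x n) * t) = some (e * gen (Gen.x (n + k)) * t)) ∧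
  ((∃ n₁ n₂ t₁ t₂, n₁ ≠ n₂ ∧ h (r * gen (Gen.y n₁) * t₁) ≠ none ∧
      h (r * gen (Gen.y n₂) * t₂) ≠ none) →
    ∃ e k, ∀ n (t : R), t ≠ 1 →
      h (r * gen (Gen.y n) * t) = some (e * gen (Gen.y (n + k)) * t)) ∧
  ((∃ n₁ n₂, n₁ ≠ n₂ ∧ h (r * gen (Gen.x n₁)) ≠ none ∧ h (r * gen (Gen.x n₂)) ≠ none) →
    ∃ e kx ky, ∀ n, h (r * gen (Gen.x n)) = some (e * gen (Gen.x (n + kx))) ∧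
      h (r * gen (Gen.y n)) = some (e * gen (Gen.y (n + ky)))) ∧
  ((∃ n₁ n₂, n₁ ≠ n₂ ∧ h (r * gen (Gen.y n₁)) ≠ none ∧ h (r * gen (Gen.y n₂)) ≠ none) →
    ∃ e kx ky, ∀ n, h (r * gen (Gen.x n)) = some (e * gen (Gen.x (n + kx))) ∧
      h (r * gen (Gen.y n)) = some (e * gen (Gen.y (n + ky))))

lemma goodMap_pid : GoodMap (pid : R → Option R) := by
  constructor
  · intro z v s h
    simp only [pid, Option.some.injEq] at h
    rw [pid, h]
  · intro r
    refine ⟨?_, ?_, ?_, ?_⟩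
    · intro _
      exact ⟨r, 0, fun n t _ => by simp [pid]⟩
    · intro _
      exact ⟨r, 0, fun n t _ => by simp [pid]⟩
    · intro _
      exact ⟨r, 0, 0, fun n => ⟨by simp [pid], by simp [pid]⟩⟩
    · intro _
      exact ⟨r, 0, 0, fun n => ⟨by simp [pid], by simp [pid]⟩⟩

lemma some_of_bind_ne_none {α : Type*} {o : Option α} {f : α → Option α}
    (hz : o.bind f ≠ none) : ∃ v u, o = some v ∧ f v = some u := by
  cases o with
  | none => simp at hz
  | some v =>
    simp only [Option.bind_some] at hz
    cases hu : f v with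
    | none => exact absurd hu hz
    | some u => exact ⟨v, u, rfl, hu⟩

lemma goodMap_step (h : R → Option R) (hG : GoodMap h) (p : R × R) :
    GoodMap (pcomp (pblock p) h) := by
  obtain ⟨hequi, hinv⟩ := hG
  have hcomp : ∀ z, pcomp (pblock p) h z = (h z).bind (pblock p) := fun z => rfl
  constructor
  · -- equivariance
    intro z v s hzv
    rw [hcomp] at hzv ⊢
    obtain ⟨w, u, hw, hu⟩ := some_of_bind_ne_none (f := pblock p) (o := h z) (by rw [hzv]; simp)
    rw [hw, Option.bind_some] at hzv
    rw [hequi z w s hw, Option.bind_some]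
    have hq := pblock_eq_some.mp hzv
    exact pblock_eq_some.mpr (by rw [← mul_assoc, hq, mul_assoc])
  · intro r
    refine ⟨?_, ?_, ?_, ?_⟩
    · -- C1 : x with tails
      rintro ⟨n₁, n₂, t₁, t₂, hm, hd₁, hd₂⟩
      rw [hcomp] at hd₁ hd₂
      obtain ⟨v₁, u₁, hv₁, hu₁⟩ := some_of_bind_ne_none hd₁
      obtain ⟨v₂, u₂, hv₂, hu₂⟩ := some_of_bind_ne_none hd₂
      obtain ⟨e, k, hek⟩ := (hinv r).1 ⟨n₁, n₂, t₁, t₂, hm, by rw [hv₁]; simp, by rw [hv₂]; simp⟩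
      -- produce two solved points for eqinv1x with q = p.2, w = p.1 * e
      have key : ∀ (nn : ℤ) (tt v u : R), h (r * gen (Gen.x nn) * tt) = some v →
          pblock p v = some u →
          ∃ (t' u' : R), t' ≠ 1 ∧ p.2 * u' = (p.1 * e) * gen (Gen.x (nn + k)) * t' := by
        intro nn tt v u hv hu
        by_cases htt : tt = 1
        · subst htt
          have hv' := hv
          rw [mul_one] at hv'
          have hb : h (r * gen (Gen.x nn) * gen (Gen.x 0)) = some (v * gen (Gen.x 0)) :=
            hequi _ _ (gen (Gen.x 0)) hv'
          have hb2 := hek nn (gen (Gen.x 0)) (gen_x_ne_one 0)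
          rw [hb] at hb2
          have hveq : v * gen (Gen.x 0) = e * gen (Gen.x (nn + k)) * gen (Gen.x 0) :=
            Option.some.inj hb2
          refine ⟨gen (Gen.x 0), u * gen (Gen.x 0), gen_x_ne_one 0, ?_⟩
          have hq := pblock_eq_some.mp hu
          calc p.2 * (u * gen (Gen.x 0)) = p.2 * u * gen (Gen.x 0) := by rw [mul_assoc]
            _ = p.1 * v * gen (Gen.x 0) := by rw [hq]
            _ = p.1 * (v * gen (Gen.x 0)) := by rw [mul_assoc]
            _ = p.1 * (e * gen (Gen.x (nn + k)) * gen (Gen.x 0)) := by rw [hveq]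
            _ = p.1 * e * gen (Gen.x (nn + k)) * gen (Gen.x 0) := by
                rw [← mul_assoc, ← mul_assoc]
        · have hv' := hek nn tt htt
          rw [hv] at hv'
          have hveq : v = e * gen (Gen.x (nn + k)) * tt := Option.some.inj hv'
          refine ⟨tt, u, htt, ?_⟩
          have hq := pblock_eq_some.mp hu
          rw [hq, hveq, ← mul_assoc, ← mul_assoc]
      obtain ⟨t₁', u₁', ht₁', he₁⟩ := key n₁ t₁ v₁ u₁ hv₁ hu₁
      obtain ⟨t₂', u₂', ht₂', he₂⟩ := key n₂ t₂ v₂ u₂ hv₂ hu₂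
      obtain ⟨e₂, k₂, hk₂⟩ := eqinv1x p.2 (p.1 * e) (n₁ + k) (n₂ + k) t₁' t₂' u₁' u₂'
        (by omega) ht₁' ht₂' he₁ he₂
      refine ⟨e₂, k + k₂, fun n t ht => ?_⟩
      rw [hcomp, hek n t ht, Option.bind_some]
      apply pblock_eq_some.mpr
      have := hk₂ (n + k) t ht
      rw [show n + (k + k₂) = n + k + k₂ by ring, this, ← mul_assoc, ← mul_assoc]
    · -- C2 : y with tails
      rintro ⟨n₁, n₂, t₁, t₂, hm, hd₁, hd₂⟩
      rw [hcomp] at hd₁ hd₂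
      obtain ⟨v₁, u₁, hv₁, hu₁⟩ := some_of_bind_ne_none hd₁
      obtain ⟨v₂, u₂, hv₂, hu₂⟩ := some_of_bind_ne_none hd₂
      obtain ⟨e, k, hek⟩ := (hinv r).2.1 ⟨n₁, n₂, t₁, t₂, hm, by rw [hv₁]; simp,
        by rw [hv₂]; simp⟩
      have key : ∀ (nn : ℤ) (tt v u : R), h (r * gen (Gen.y nn) * tt) = some v →
          pblock p v = some u →
          ∃ (t' u' : R), t' ≠ 1 ∧ p.2 * u' = (p.1 * e) * gen (Gen.y (nn + k)) * t' := by
        intro nn tt v u hv hu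
        by_cases htt : tt = 1
        · subst htt
          have hv' := hv
          rw [mul_one] at hv'
          have hb : h (r * gen (Gen.y nn) * gen (Gen.x 0)) = some (v * gen (Gen.x 0)) :=
            hequi _ _ (gen (Gen.x 0)) hv'
          have hb2 := hek nn (gen (Gen.x 0)) (gen_x_ne_one 0)
          rw [hb] at hb2
          have hveq : v * gen (Gen.x 0) = e * gen (Gen.y (nn + k)) * gen (Gen.x 0) :=
            Option.some.inj hb2
          refine ⟨gen (Gen.x 0), u * gen (Gen.x 0), gen_x_ne_one 0, ?_⟩
          have hq := pblock_eq_some.mp hu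
          calc p.2 * (u * gen (Gen.x 0)) = p.2 * u * gen (Gen.x 0) := by rw [mul_assoc]
            _ = p.1 * v * gen (Gen.x 0) := by rw [hq]
            _ = p.1 * (v * gen (Gen.x 0)) := by rw [mul_assoc]
            _ = p.1 * (e * gen (Gen.y (nn + k)) * gen (Gen.x 0)) := by rw [hveq]
            _ = p.1 * e * gen (Gen.y (nn + k)) * gen (Gen.x 0) := by
                rw [← mul_assoc, ← mul_assoc]
        · have hv' := hek nn tt htt
          rw [hv] at hv'
          have hveq : v = e * gen (Gen.y (nn + k)) * tt := Option.some.inj hv'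
          refine ⟨tt, u, htt, ?_⟩
          have hq := pblock_eq_some.mp hu
          rw [hq, hveq, ← mul_assoc, ← mul_assoc]
      obtain ⟨t₁', u₁', ht₁', he₁⟩ := key n₁ t₁ v₁ u₁ hv₁ hu₁
      obtain ⟨t₂', u₂', ht₂', he₂⟩ := key n₂ t₂ v₂ u₂ hv₂ hu₂
      obtain ⟨e₂, k₂, hk₂⟩ := eqinv1y p.2 (p.1 * e) (n₁ + k) (n₂ + k) t₁' t₂' u₁' u₂'
        (by omega) ht₁' ht₂' he₁ he₂
      refine ⟨e₂, k + k₂, fun n t ht => ?_⟩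
      rw [hcomp, hek n t ht, Option.bind_some]
      apply pblock_eq_some.mpr
      have := hk₂ (n + k) t ht
      rw [show n + (k + k₂) = n + k + k₂ by ring, this, ← mul_assoc, ← mul_assoc]
    · -- C3 : bare x pair
      rintro ⟨n₁, n₂, hm, hd₁, hd₂⟩
      rw [hcomp] at hd₁ hd₂
      obtain ⟨v₁, u₁, hv₁, hu₁⟩ := some_of_bind_ne_none hd₁
      obtain ⟨v₂, u₂, hv₂, hu₂⟩ := some_of_bind_ne_none hd₂
      obtain ⟨e, kx, ky, hek⟩ := (hinv r).2.2.1 ⟨n₁, n₂, hm, by rw [hv₁]; simp, by rw [hv₂]; simp⟩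
      have hveq₁ : v₁ = e * gen (Gen.x (n₁ + kx)) := by
        have h' := (hek n₁).1; rw [hv₁] at h'; exact Option.some.inj h'
      have hveq₂ : v₂ = e * gen (Gen.x (n₂ + kx)) := by
        have h' := (hek n₂).1; rw [hv₂] at h'; exact Option.some.inj h'
      have hq₁ : p.2 * u₁ = (p.1 * e) * gen (Gen.x (n₁ + kx)) := by
        rw [pblock_eq_some.mp hu₁, hveq₁, ← mul_assoc]
      have hq₂ : p.2 * u₂ = (p.1 * e) * gen (Gen.x (n₂ + kx)) := by
        rw [pblock_eq_some.mp hu₂, hveq₂, ← mul_assoc]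
      obtain ⟨e₂, ex, ey, hk₂⟩ := eqinv2x p.2 (p.1 * e) (n₁ + kx) (n₂ + kx) u₁ u₂
        (by omega) hq₁ hq₂
      refine ⟨e₂, kx + ex, ky + ey, fun n => ?_⟩
      constructor
      · rw [hcomp, (hek n).1, Option.bind_some]
        apply pblock_eq_some.mpr
        have hx := (hk₂ (n + kx)).1
        rw [show n + (kx + ex) = n + kx + ex by ring, hx, ← mul_assoc]
      · rw [hcomp, (hek n).2, Option.bind_some]
        apply pblock_eq_some.mpr
        have hy := (hk₂ (n + ky)).2
        rw [show n + (ky + ey) = n + ky + ey by ring, hy, ← mul_assoc]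
    · -- C4 : bare y pair
      rintro ⟨n₁, n₂, hm, hd₁, hd₂⟩
      rw [hcomp] at hd₁ hd₂
      obtain ⟨v₁, u₁, hv₁, hu₁⟩ := some_of_bind_ne_none hd₁
      obtain ⟨v₂, u₂, hv₂, hu₂⟩ := some_of_bind_ne_none hd₂
      obtain ⟨e, kx, ky, hek⟩ := (hinv r).2.2.2 ⟨n₁, n₂, hm, by rw [hv₁]; simp, by rw [hv₂]; simp⟩
      have hveq₁ : v₁ = e * gen (Gen.y (n₁ + ky)) := by
        have h' := (hek n₁).2; rw [hv₁] at h'; exact Option.some.inj h'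
      have hveq₂ : v₂ = e * gen (Gen.y (n₂ + ky)) := by
        have h' := (hek n₂).2; rw [hv₂] at h'; exact Option.some.inj h'
      have hq₁ : p.2 * u₁ = (p.1 * e) * gen (Gen.y (n₁ + ky)) := by
        rw [pblock_eq_some.mp hu₁, hveq₁, ← mul_assoc]
      have hq₂ : p.2 * u₂ = (p.1 * e) * gen (Gen.y (n₂ + ky)) := by
        rw [pblock_eq_some.mp hu₂, hveq₂, ← mul_assoc]
      obtain ⟨e₂, ex, ey, hk₂⟩ := eqinv2y p.2 (p.1 * e) (n₁ + ky) (n₂ + ky) u₁ u₂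
        (by omega) hq₁ hq₂
      refine ⟨e₂, kx + ex, ky + ey, fun n => ?_⟩
      constructor
      · rw [hcomp, (hek n).1, Option.bind_some]
        apply pblock_eq_some.mpr
        have hx := (hk₂ (n + kx)).1
        rw [show n + (kx + ex) = n + kx + ex by ring, hx, ← mul_assoc]
      · rw [hcomp, (hek n).2, Option.bind_some]
        apply pblock_eq_some.mpr
        have hy := (hk₂ (n + ky)).2
        rw [show n + (ky + ey) = n + ky + ey by ring, hy, ← mul_assoc]

lemma goodMap_foldl : ∀ (l : List (R × R)) (acc : R → Option R), GoodMap acc →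
    GoodMap (l.foldl (fun acc p => pcomp (pblock p) acc) acc) := by
  intro l
  induction l with
  | nil => intro acc h; exact h
  | cons p l ih =>
    intro acc h
    exact ih _ (goodMap_step acc h p)

lemma goodMap_of_hull {h : R → Option R} (hh : InInvHull h) : GoodMap h := by
  obtain ⟨l, -, rfl⟩ := hh
  exact goodMap_foldl l pid goodMap_pid
/-- Let `r ∈ R` and let `A ∈ J(R)`.
(1) If `A` contains two elements `r·x_{n₁}`, `r·x_{n₂}` with `n₁ ≠ n₂` (or two elements
`r·y_{n₁}`, `r·y_{n₂}` with `n₁ ≠ n₂`), then `A` contains `r·x_n` and `r·y_n` for all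
`n ∈ ℤ`.
(2) If `A` contains `r·x_{n₁}·t₁` and `r·x_{n₂}·t₂` with `n₁ ≠ n₂`, then
`r·(⋃_{n, w' ≠ e} x_n w' R) ⊆ A`; symmetrically for `y`. -/
theorem cstar_stmt17 (r : R) (A : Set R) (hA : IsConstructible A) :
    ((∃ n₁ n₂ : ℤ, n₁ ≠ n₂ ∧
        ((r * gen (Gen.x n₁) ∈ A ∧ r * gen (Gen.x n₂) ∈ A) ∨
         (r * gen (Gen.y n₁) ∈ A ∧ r * gen (Gen.y n₂) ∈ A))) →
      ∀ n : ℤ, r * gen (Gen.x n) ∈ A ∧ r * gen (Gen.y n) ∈ A) ∧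
    ((∃ (n₁ n₂ : ℤ) (t₁ t₂ : R), n₁ ≠ n₂ ∧
        r * gen (Gen.x n₁) * t₁ ∈ A ∧ r * gen (Gen.x n₂) * t₂ ∈ A) →
      {z : R | ∃ (n : ℤ) (w' u : R), w' ≠ 1 ∧ z = r * gen (Gen.x n) * w' * u} ⊆ A) ∧
    ((∃ (n₁ n₂ : ℤ) (t₁ t₂ : R), n₁ ≠ n₂ ∧
        r * gen (Gen.y n₁) * t₁ ∈ A ∧ r * gen (Gen.y n₂) * t₂ ∈ A) →
      {z : R | ∃ (n : ℤ) (w' u : R), w' ≠ 1 ∧ z = r * gen (Gen.y n) * w' * u} ⊆ A) := by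
  obtain ⟨h, hh, hdom⟩ := hA
  obtain ⟨hequi, hinv⟩ := goodMap_of_hull hh
  have hmem : ∀ z : R, z ∈ A ↔ h z ≠ none := by intro z; rw [hdom]; rfl
  refine ⟨?_, ?_, ?_⟩
  · rintro ⟨n₁, n₂, hne, hcase⟩ n
    rcases hcase with ⟨hx₁, hx₂⟩ | ⟨hy₁, hy₂⟩
    · obtain ⟨e, kx, ky, hek⟩ := (hinv r).2.2.1 ⟨n₁, n₂, hne, (hmem _).mp hx₁, (hmem _).mp hx₂⟩
      exact ⟨(hmem _).mpr (by rw [(hek n).1]; simp), (hmem _).mpr (by rw [(hek n).2]; simp)⟩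
    · obtain ⟨e, kx, ky, hek⟩ := (hinv r).2.2.2 ⟨n₁, n₂, hne, (hmem _).mp hy₁, (hmem _).mp hy₂⟩
      exact ⟨(hmem _).mpr (by rw [(hek n).1]; simp), (hmem _).mpr (by rw [(hek n).2]; simp)⟩
  · rintro ⟨n₁, n₂, t₁, t₂, hne, h1, h2⟩ z ⟨n, w', u, hw', rfl⟩
    obtain ⟨e, k, hek⟩ := (hinv r).1 ⟨n₁, n₂, t₁, t₂, hne, (hmem _).mp h1, (hmem _).mp h2⟩
    refine (hmem _).mpr ?_
    rw [mul_assoc (r * gen (Gen.x n)) w' u, hek n (w' * u) (mul_ne_one hw')]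
    simp
  · rintro ⟨n₁, n₂, t₁, t₂, hne, h1, h2⟩ z ⟨n, w', u, hw', rfl⟩
    obtain ⟨e, k, hek⟩ := (hinv r).2.1 ⟨n₁, n₂, t₁, t₂, hne, (hmem _).mp h1, (hmem _).mp h2⟩
    refine (hmem _).mpr ?_
    rw [mul_assoc (r * gen (Gen.y n)) w' u, hek n (w' * u) (mul_ne_one hw')]
    simp

end SgC
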